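/- arXiv:1703.01733 — 4 statements merged into one kernel-verified Lean document; each statement's English description precedes it below -/
import Mathlib

section
/- For operators S and T on a Hilbert space with 0 ≤ S ≤ I and T ≥ 0, and for every c > 0, the following operator inequality holds: I − (S+T)^{−1/2} S (S+T)^{−1/2} ≤ (1+c)(I−S) + (2+c+c^{−1}) T, where the inverse is taken on the support of S+T. -/
open Matrix Kronecker ComplexOrder

/-- Apply a real function to a Hermitian matrix via its spectral decomposition
(junk value `0` for non-Hermitian input). -/
noncomputable def matFun {n : Type*} [Fintype n] [DecidableEq n]
    (f : ℝ → ℝ) (A : Matrix n n ℂ) : Matrix n n ℂ :=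
  if hA : A.IsHermitian then
    (hA.eigenvectorUnitary : Matrix n n ℂ) *
      Matrix.diagonal (fun i => (f (hA.eigenvalues i) : ℂ)) *
      star (hA.eigenvectorUnitary : Matrix n n ℂ)
  else 0

/-- Matrix logarithm base 2, taken on the support (eigenvalue 0 ↦ 0 since `Real.logb 2 0 = 0`). -/
noncomputable def mlog {n : Type*} [Fintype n] [DecidableEq n] (A : Matrix n n ℂ) :
    Matrix n n ℂ := matFun (Real.logb 2) A

/-- Positive-semidefinite square root of a Hermitian matrix. -/
noncomputable def msqrt {n : Type*} [Fintype n] [DecidableEq n] (A : Matrix n n ℂ) :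
    Matrix n n ℂ := matFun Real.sqrt A

/-- Square root of the Moore–Penrose pseudoinverse (on the support), i.e. `A ↦ A^{-1/2}`. -/
noncomputable def pinvSqrt {n : Type*} [Fintype n] [DecidableEq n] (A : Matrix n n ℂ) :
    Matrix n n ℂ := matFun (fun x => (Real.sqrt x)⁻¹) A

/-- Trace norm `‖A‖₁ = Tr √(AᴴA)`. -/
noncomputable def traceNorm {n : Type*} [Fintype n] [DecidableEq n] (A : Matrix n n ℂ) : ℝ :=
  (msqrt (Aᴴ * A)).trace.re

/-- Quantum relative entropy (base 2), `D(ρ‖σ) = Tr{ρ (log₂ρ − log₂σ)}`. -/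
noncomputable def relEnt {n : Type*} [Fintype n] [DecidableEq n] (ρ σ : Matrix n n ℂ) : ℝ :=
  (ρ * (mlog ρ - mlog σ)).trace.re

/-- Root fidelity `√F(ρ,σ) = ‖√ρ√σ‖₁`. -/
noncomputable def sqrtFid {n : Type*} [Fintype n] [DecidableEq n] (ρ σ : Matrix n n ℂ) : ℝ :=
  traceNorm (msqrt ρ * msqrt σ)

/-- Fidelity `F(ρ,σ) = ‖√ρ√σ‖₁²`. -/
noncomputable def fid {n : Type*} [Fintype n] [DecidableEq n] (ρ σ : Matrix n n ℂ) : ℝ :=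
  (sqrtFid ρ σ) ^ 2

/-- Von Neumann entropy (base 2). -/
noncomputable def vnEntropy {n : Type*} [Fintype n] [DecidableEq n] (ρ : Matrix n n ℂ) : ℝ :=
  -((ρ * mlog ρ).trace.re)

/-- A density operator: positive semi-definite with unit trace. -/
def IsDensity {n : Type*} [Fintype n] [DecidableEq n] (ρ : Matrix n n ℂ) : Prop :=
  ρ.PosSemidef ∧ ρ.trace = 1

/-- Support inclusion `supp ρ ⊆ supp σ`, phrased via kernel containment. -/
def SuppLE {n : Type*} [Fintype n] [DecidableEq n] (ρ σ : Matrix n n ℂ) : Prop :=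
  ∀ v : n → ℂ, σ *ᵥ v = 0 → ρ *ᵥ v = 0

/-- A-marginal (partial trace over B) of a bipartite matrix. -/
noncomputable def margA {a b : Type*} [Fintype a] [Fintype b]
    (ρ : Matrix (a × b) (a × b) ℂ) : Matrix a a ℂ :=
  Matrix.of fun i i' => ∑ j, ρ (i, j) (i', j)

/-- B-marginal (partial trace over A) of a bipartite matrix. -/
noncomputable def margB {a b : Type*} [Fintype a] [Fintype b]
    (ρ : Matrix (a × b) (a × b) ℂ) : Matrix b b ℂ :=
  Matrix.of fun j j' => ∑ i, ρ (i, j) (i, j')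

/-- Max-relative entropy `D_max(ω‖τ) = inf{λ : ω ≤ 2^λ τ}`. -/
noncomputable def Dmax {n : Type*} [Fintype n] [DecidableEq n] (ω τ : Matrix n n ℂ) : ℝ :=
  sInf {l : ℝ | ((2 : ℝ) ^ l • τ - ω).PosSemidef}

/-- Purified distance between (normalized) states, `P(ρ,σ) = √(1 − F(ρ,σ))`. -/
noncomputable def pDist {n : Type*} [Fintype n] [DecidableEq n] (ρ σ : Matrix n n ℂ) : ℝ :=
  Real.sqrt (1 - fid ρ σ)

namespace HNaux
variable {n : Type*} [Fintype n] [DecidableEq n] {A : Matrix n n ℂ}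

lemma matFun_def (hA : A.IsHermitian) (f : ℝ → ℝ) :
    matFun f A = (hA.eigenvectorUnitary : Matrix n n ℂ) *
      Matrix.diagonal (fun i => (f (hA.eigenvalues i) : ℂ)) *
      star (hA.eigenvectorUnitary : Matrix n n ℂ) := dif_pos hA

lemma matFun_mul (hA : A.IsHermitian) (f g h : ℝ → ℝ)
    (hfg : ∀ i, f (hA.eigenvalues i) * g (hA.eigenvalues i) = h (hA.eigenvalues i)) :
    matFun f A * matFun g A = matFun h A := by
  rw [matFun_def hA f, matFun_def hA g, matFun_def hA h]
  set U : Matrix n n ℂ := (hA.eigenvectorUnitary : Matrix n n ℂ) with hUdef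
  have hU : star U * U = 1 := Matrix.mem_unitaryGroup_iff'.mp (hA.eigenvectorUnitary).2
  have hd : Matrix.diagonal (fun i => (f (hA.eigenvalues i) : ℂ)) *
      Matrix.diagonal (fun i => (g (hA.eigenvalues i) : ℂ)) =
      Matrix.diagonal (fun i => (h (hA.eigenvalues i) : ℂ)) := by
    rw [Matrix.diagonal_mul_diagonal]
    refine congrArg Matrix.diagonal (funext fun i => ?_)
    rw [← Complex.ofReal_mul, hfg i]
  have h1 : (U * Matrix.diagonal (fun i => (f (hA.eigenvalues i) : ℂ)) * star U) *
      (U * Matrix.diagonal (fun i => (g (hA.eigenvalues i) : ℂ)) * star U) =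
      U * Matrix.diagonal (fun i => (f (hA.eigenvalues i) : ℂ)) * (star U * U) *
      (Matrix.diagonal (fun i => (g (hA.eigenvalues i) : ℂ)) * star U) := by
    noncomm_ring
  rw [h1, hU, mul_one]
  calc U * Matrix.diagonal (fun i => (f (hA.eigenvalues i) : ℂ)) *
      (Matrix.diagonal (fun i => (g (hA.eigenvalues i) : ℂ)) * star U)
      = U * (Matrix.diagonal (fun i => (f (hA.eigenvalues i) : ℂ)) *
        Matrix.diagonal (fun i => (g (hA.eigenvalues i) : ℂ))) * star U := by noncomm_ring
    _ = _ := by rw [hd]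

lemma matFun_id (hA : A.IsHermitian) : matFun (fun x => x) A = A := by
  rw [matFun_def hA]
  conv_rhs => rw [hA.spectral_theorem]
  rfl

lemma matFun_one (hA : A.IsHermitian) : matFun (fun _ => 1) A = 1 := by
  rw [matFun_def hA]
  have hU : (hA.eigenvectorUnitary : Matrix n n ℂ) *
      (star (hA.eigenvectorUnitary : Matrix n n ℂ)) = 1 :=
    Matrix.mem_unitaryGroup_iff.mp (hA.eigenvectorUnitary).2
  simp [Matrix.diagonal_one, hU]

lemma matFun_sub (hA : A.IsHermitian) (f g : ℝ → ℝ) :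
    matFun f A - matFun g A = matFun (fun x => f x - g x) A := by
  rw [matFun_def hA f, matFun_def hA g, matFun_def hA]
  rw [← Matrix.sub_mul, ← Matrix.mul_sub, Matrix.diagonal_sub]
  have : (fun i => ((f (hA.eigenvalues i) : ℂ) - (g (hA.eigenvalues i) : ℂ))) =
      fun i => ((f (hA.eigenvalues i) - g (hA.eigenvalues i) : ℝ) : ℂ) :=
    funext fun i => by push_cast; rfl
  rw [this]

lemma matFun_posSemidef (hA : A.IsHermitian) {f : ℝ → ℝ}
    (hf : ∀ i, 0 ≤ f (hA.eigenvalues i)) : (matFun f A).PosSemidef := by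
  rw [matFun_def hA, Matrix.star_eq_conjTranspose]
  exact (Matrix.posSemidef_diagonal_iff.mpr fun i => by
    simpa using Complex.zero_le_real.mpr (hf i)).mul_mul_conjTranspose_same _

lemma matFun_isHermitian (hA : A.IsHermitian) (f : ℝ → ℝ) : (matFun f A).IsHermitian := by
  unfold matFun
  rw [dif_pos hA, Matrix.star_eq_conjTranspose]
  have hd : (Matrix.diagonal (fun i => (f (hA.eigenvalues i) : ℂ))).IsHermitian :=
    Matrix.isHermitian_diagonal_of_self_adjoint _
      (funext fun i => Complex.conj_ofReal _)
  exact Matrix.isHermitian_mul_mul_conjTranspose _ hd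

lemma expand_cross (γ : ℂ) (X' X Y' Y : Matrix n n ℂ) :
    (γ • X' - γ⁻¹ • Y') * (γ • X - γ⁻¹ • Y) =
      (γ * γ) • (X' * X) - (γ⁻¹ * γ) • (X' * Y) - (γ * γ⁻¹) • (Y' * X)
        + (γ⁻¹ * γ⁻¹) • (Y' * Y) := by
  simp only [Matrix.sub_mul, Matrix.mul_sub, smul_mul_assoc, mul_smul_comm, smul_smul, smul_sub]
  abel

lemma sub_posSemidef_of_sq {X Y : Matrix n n ℂ} (hX : X.PosSemidef) (hY : Y.PosSemidef)
    (h : (Y * Y - X * X).PosSemidef) : (Y - X).PosSemidef := by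
  have hD : (Y - X).IsHermitian := hY.1.sub hX.1
  refine hD.posSemidef_iff_eigenvalues_nonneg.mpr fun i => show 0 ≤ hD.eigenvalues i from ?_
  by_contra hneg
  push_neg at hneg
  set δ := hD.eigenvalues i with hδ
  set v : n → ℂ := ⇑(hD.eigenvectorBasis i) with hv
  have hvec : (Y - X) *ᵥ v = δ • v := hD.mulVec_eigenvectorBasis i
  set q1 := star v ⬝ᵥ (Y *ᵥ v) with hq1
  set q2 := star v ⬝ᵥ (X *ᵥ v) with hq2
  have hq1n : 0 ≤ q1 := hY.dotProduct_mulVec_nonneg v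
  have hq2n : 0 ≤ q2 := hX.dotProduct_mulVec_nonneg v
  have hid : Y * Y - X * X = Y * (Y - X) + (Y - X) * X := by noncomm_ring
  have key : star v ⬝ᵥ ((Y * Y - X * X) *ᵥ v) = (δ : ℂ) * (q1 + q2) := by
    rw [hid, Matrix.add_mulVec, dotProduct_add, ← Matrix.mulVec_mulVec, hvec,
      Matrix.mulVec_smul, dotProduct_smul, ← Matrix.mulVec_mulVec]
    have h2 : star v ⬝ᵥ ((Y - X) *ᵥ (X *ᵥ v)) = star ((Y - X) *ᵥ v) ⬝ᵥ (X *ᵥ v) := by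
      rw [Matrix.star_mulVec, hD.eq, Matrix.dotProduct_mulVec]
    rw [h2, hvec, star_smul, smul_dotProduct]
    push_cast [Complex.real_smul, star_trivial]
    ring
  have hge : 0 ≤ (δ : ℂ) * (q1 + q2) := key ▸ h.dotProduct_mulVec_nonneg v
  have hqsum : q1 + q2 = 0 := by
    set q := q1 + q2 with hq
    have hqn : 0 ≤ q := add_nonneg hq1n hq2n
    rw [Complex.nonneg_iff] at hqn hge
    have him : q.im = 0 := hqn.2.symm
    have hre : ((δ : ℂ) * q).re = δ * q.re := by
      simp [Complex.mul_re, him]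
    rw [hre] at hge
    have : q.re = 0 := le_antisymm (by nlinarith [hge.1]) hqn.1
    exact Complex.ext this (by simp [him])
  have hq10 : q1 = 0 := le_antisymm (by rw [← hqsum]; exact le_add_of_nonneg_right hq2n) hq1n
  have hq20 : q2 = 0 := by rwa [hq10, zero_add] at hqsum
  have hXv : X *ᵥ v = 0 := (hX.dotProduct_mulVec_zero_iff v).mp hq20
  have hYv : Y *ᵥ v = 0 := (hY.dotProduct_mulVec_zero_iff v).mp hq10
  have : δ • v = 0 := by rw [← hvec, Matrix.sub_mulVec, hXv, hYv, sub_zero]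
  have hvne : v ≠ 0 := by
    intro h0
    have := hD.eigenvectorBasis.orthonormal.ne_zero i
    apply this
    ext j
    exact congrFun h0 j
  rcases smul_eq_zero.mp this with h1 | h1
  · exact absurd h1 (ne_of_lt hneg)
  · exact hvne h1

lemma posSemidef_real_smul {X : Matrix n n ℂ} (hX : X.PosSemidef) {r : ℝ} (hr : 0 ≤ r) :
    ((r : ℂ) • X).PosSemidef := by
  refine Matrix.posSemidef_iff_dotProduct_mulVec.mpr ⟨?_, ?_⟩
  · unfold Matrix.IsHermitian
    rw [Matrix.conjTranspose_smul, Complex.star_def, Complex.conj_ofReal, hX.1.eq]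
  · intro x
    rw [Matrix.smul_mulVec, dotProduct_smul, smul_eq_mul]
    exact mul_nonneg (Complex.zero_le_real.mpr hr) (hX.dotProduct_mulVec_nonneg x)

lemma real_smul_matrix (r : ℝ) (X : Matrix n n ℂ) : r • X = (r : ℂ) • X := by
  ext i j
  simp [Complex.real_smul]

lemma eig_le_one {S : Matrix n n ℂ} (hS : S.PosSemidef)
    (hS1 : ((1 : Matrix n n ℂ) - S).PosSemidef) (i : n) : hS.1.eigenvalues i ≤ 1 := by
  have hvv : star ⇑(hS.1.eigenvectorBasis i) ⬝ᵥ ⇑(hS.1.eigenvectorBasis i) = 1 := by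
    have h1 : (inner ℂ (hS.1.eigenvectorBasis i) (hS.1.eigenvectorBasis i) : ℂ) =
        star ⇑(hS.1.eigenvectorBasis i) ⬝ᵥ ⇑(hS.1.eigenvectorBasis i) :=
      (EuclideanSpace.inner_eq_star_dotProduct _ _).trans (dotProduct_comm _ _)
    rw [← h1, inner_self_eq_norm_sq_to_K, hS.1.eigenvectorBasis.orthonormal.1 i]
    norm_num
  have h2 := hS1.re_dotProduct_nonneg ⇑(hS.1.eigenvectorBasis i)
  rw [Matrix.sub_mulVec, dotProduct_sub, Matrix.one_mulVec, hvv, map_sub] at h2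
  rw [show (RCLike.re (1:ℂ)) = 1 by simp] at h2
  have h3 := hS.1.eigenvalues_eq i
  rw [h3]
  linarith [h2]

end HNaux


open HNaux in
/-- Hayashi–Nagaoka operator inequality. -/
theorem hayashi_nagaoka {n : Type*} [Fintype n] [DecidableEq n]
    (S T : Matrix n n ℂ) (hS : S.PosSemidef) (hS1 : ((1 : Matrix n n ℂ) - S).PosSemidef)
    (hT : T.PosSemidef) (c : ℝ) (hc : 0 < c) :
    ((1 + c) • ((1 : Matrix n n ℂ) - S) + (2 + c + c⁻¹) • T -
      ((1 : Matrix n n ℂ) - pinvSqrt (S + T) * S * pinvSqrt (S + T))).PosSemidef := by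
  have hST : (S + T).PosSemidef := hS.add hT
  have hA : (S + T).IsHermitian := hST.1
  have evnn : ∀ i, 0 ≤ hA.eigenvalues i := fun i => hST.eigenvalues_nonneg i
  have evTnn : ∀ i, 0 ≤ hT.1.eigenvalues i := fun i => hT.eigenvalues_nonneg i
  have evSnn : ∀ i, 0 ≤ hS.1.eigenvalues i := fun i => hS.eigenvalues_nonneg i
  have evSle1 : ∀ i, hS.1.eigenvalues i ≤ 1 := fun i => eig_le_one hS hS1 i
  -- main players
  set M : Matrix n n ℂ := matFun (fun x => (Real.sqrt x)⁻¹) (S + T) with hMdef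
  set N : Matrix n n ℂ := matFun Real.sqrt (S + T) with hNdef
  set P : Matrix n n ℂ := matFun (fun x => if x = 0 then 0 else 1) (S + T) with hPdef
  set Rt : Matrix n n ℂ := matFun Real.sqrt T with hRtdef
  set Rs : Matrix n n ℂ := matFun Real.sqrt S with hRsdef
  have hpinv : pinvSqrt (S + T) = M := rfl
  rw [hpinv]
  -- basic hermitian facts
  have hMherm : M.IsHermitian := matFun_isHermitian hA _
  have hRtherm : Rt.IsHermitian := matFun_isHermitian hT.1 _
  -- functional calculus relations
  have hNN : N * N = S + T := by
    rw [hNdef, matFun_mul hA Real.sqrt Real.sqrt (fun x => x)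
      (fun i => Real.mul_self_sqrt (evnn i)), matFun_id hA]
  have pwInv : ∀ i, (Real.sqrt (hA.eigenvalues i))⁻¹ * hA.eigenvalues i
      = Real.sqrt (hA.eigenvalues i) := by
    intro i
    rcases (evnn i).eq_or_lt.imp Eq.symm id with h0 | h0
    · rw [h0]; simp
    · have hs : 0 < Real.sqrt (hA.eigenvalues i) := Real.sqrt_pos.mpr h0
      rw [inv_mul_eq_div, div_eq_iff hs.ne', Real.mul_self_sqrt (evnn i)]
  have pwInv' : ∀ i, hA.eigenvalues i * (Real.sqrt (hA.eigenvalues i))⁻¹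
      = Real.sqrt (hA.eigenvalues i) := fun i => by rw [mul_comm]; exact pwInv i
  have pwNP : ∀ i, Real.sqrt (hA.eigenvalues i) * (Real.sqrt (hA.eigenvalues i))⁻¹
      = (if hA.eigenvalues i = 0 then (0:ℝ) else 1) := by
    intro i
    rcases (evnn i).eq_or_lt.imp Eq.symm id with h0 | h0
    · rw [h0]; simp
    · have hs : 0 < Real.sqrt (hA.eigenvalues i) := Real.sqrt_pos.mpr h0
      rw [mul_inv_cancel₀ hs.ne', if_neg h0.ne']
  have hMA : M * (S + T) = N := by
    conv_lhs => rw [show S + T = matFun (fun x => x) (S + T) from (matFun_id hA).symm]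
    rw [hMdef, hNdef, matFun_mul hA _ _ Real.sqrt pwInv]
  have hAM : (S + T) * M = N := by
    conv_lhs => rw [show S + T = matFun (fun x => x) (S + T) from (matFun_id hA).symm]
    rw [hMdef, hNdef, matFun_mul hA _ _ Real.sqrt pwInv']
  have hNM : N * M = P := by
    rw [hNdef, hMdef, hPdef, matFun_mul hA _ _ (fun x => if x = 0 then (0:ℝ) else 1) pwNP]
  have hRtRt : Rt * Rt = T := by
    rw [hRtdef, matFun_mul hT.1 Real.sqrt Real.sqrt (fun x => x)
      (fun i => Real.mul_self_sqrt (evTnn i)), matFun_id hT.1]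
  have hRsRs : Rs * Rs = S := by
    rw [hRsdef, matFun_mul hS.1 Real.sqrt Real.sqrt (fun x => x)
      (fun i => Real.mul_self_sqrt (evSnn i)), matFun_id hS.1]
  have hRs_psd : Rs.PosSemidef := matFun_posSemidef hS.1 (fun i => Real.sqrt_nonneg _)
  have hN_psd : N.PosSemidef := matFun_posSemidef hA (fun i => Real.sqrt_nonneg _)
  -- algebraic consequences
  have hMSM : M * S * M = P - M * T * M := by
    have h1 : M * S * M = M * (S + T) * M - M * T * M := by noncomm_ring
    rw [h1, hMA, hNM]
  have hMS : M * S = N - M * T := by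
    have h1 : M * S = M * (S + T) - M * T := by noncomm_ring
    rw [h1, hMA]
  have hSM : S * M = N - T * M := by
    have h1 : S * M = (S + T) * M - T * M := by noncomm_ring
    rw [h1, hAM]
  -- positivity of 1 - P
  have hQ_psd : ((1 : Matrix n n ℂ) - P).PosSemidef := by
    rw [hPdef, show (1 : Matrix n n ℂ) = matFun (fun _ => 1) (S + T) from (matFun_one hA).symm,
      matFun_sub hA]
    exact matFun_posSemidef hA fun i => by split_ifs <;> norm_num
  -- positivity of N - S
  have hNS : (N - S).PosSemidef := by
    have hNRs : (N - Rs).PosSemidef := by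
      refine sub_posSemidef_of_sq hRs_psd hN_psd ?_
      rw [hNN, hRsRs, add_sub_cancel_left]
      exact hT
    have hRsS : (Rs - S).PosSemidef := by
      have he : Rs - S = matFun (fun x => Real.sqrt x - x) S := by
        conv_lhs => rw [show S = matFun (fun x => x) S from (matFun_id hS.1).symm]
        rw [hRsdef, matFun_sub hS.1]
      rw [he]
      refine matFun_posSemidef hS.1 fun i => ?_
      have h0 := evSnn i
      have h1 := evSle1 i
      have h2 : Real.sqrt (hS.1.eigenvalues i) ≤ 1 := Real.sqrt_le_one.mpr h1
      nlinarith [Real.sq_sqrt h0, Real.sqrt_nonneg (hS.1.eigenvalues i)]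
    have hsum : (N - Rs) + (Rs - S) = N - S := sub_add_sub_cancel _ _ _
    rw [← hsum]
    exact hNRs.add hRsS
  -- the scalar γ = √c
  set γ : ℂ := ((Real.sqrt c : ℝ) : ℂ) with hγdef
  have hγstar : star γ = γ := by rw [hγdef, Complex.star_def, Complex.conj_ofReal]
  have hγ2 : γ * γ = (c : ℂ) := by
    rw [hγdef, ← Complex.ofReal_mul, Real.mul_self_sqrt hc.le]
  have hγne : γ ≠ 0 := by
    rw [hγdef]
    exact Complex.ofReal_ne_zero.mpr (Real.sqrt_pos.mpr hc).ne'
  have hγig : γ⁻¹ * γ = 1 := inv_mul_cancel₀ hγne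
  have hγgi : γ * γ⁻¹ = 1 := mul_inv_cancel₀ hγne
  have hγii : γ⁻¹ * γ⁻¹ = (c : ℂ)⁻¹ := by rw [← mul_inv, hγ2]
  set Z : Matrix n n ℂ := γ • (Rt * (M - 1)) - γ⁻¹ • Rt with hZdef
  have hZH : Zᴴ = γ • ((M - 1) * Rt) - γ⁻¹ • Rt := by
    rw [hZdef, Matrix.conjTranspose_sub, Matrix.conjTranspose_smul, Matrix.conjTranspose_smul,
      Matrix.conjTranspose_mul, Matrix.conjTranspose_sub, Matrix.conjTranspose_one,
      hMherm.eq, hRtherm.eq, hγstar, star_inv₀, hγstar]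
  have e1 : Zᴴ * Z = (c : ℂ) • ((M - 1) * T * (M - 1)) + (c : ℂ)⁻¹ • T
      - ((M - 1) * T) - (T * (M - 1)) := by
    rw [hZH, hZdef]
    have a1 : ((M - 1) * Rt) * (Rt * (M - 1)) = (M - 1) * T * (M - 1) := by
      rw [← Matrix.mul_assoc, Matrix.mul_assoc (M - 1) Rt Rt, hRtRt]
    have a2 : ((M - 1) * Rt) * Rt = (M - 1) * T := by rw [Matrix.mul_assoc, hRtRt]
    have a3 : Rt * (Rt * (M - 1)) = T * (M - 1) := by rw [← Matrix.mul_assoc, hRtRt]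
    rw [expand_cross, a1, a2, a3, hγ2, hγgi, hγig, hγii, hRtRt, one_smul, one_smul]
    abel
  have exp1 : (M - 1) * T * (M - 1) = M * T * M - M * T - T * M + T := by noncomm_ring
  have exp2 : (M - 1) * S * (M - 1) = M * S * M - M * S - S * M + S := by noncomm_ring
  have hMT1 : (M - 1) * T = M * T - T := by noncomm_ring
  have hTM1 : T * (M - 1) = T * M - T := by noncomm_ring
  have key : (1 + c) • ((1 : Matrix n n ℂ) - S) + (2 + c + c⁻¹) • T
      - ((1 : Matrix n n ℂ) - M * S * M)
      = Zᴴ * Z + ((1 + c : ℝ) : ℂ) • ((M - 1) * S * (M - 1))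
        + (c : ℂ) • ((1 : Matrix n n ℂ) - P) + ((2 * (1 + c) : ℝ) : ℂ) • (N - S) := by
    rw [e1, exp1, exp2, hMT1, hTM1, hMSM, hMS, hSM,
      real_smul_matrix (1 + c), real_smul_matrix (2 + c + c⁻¹)]
    push_cast
    module
  rw [key]
  have psd1 : (Zᴴ * Z).PosSemidef := Matrix.posSemidef_conjTranspose_mul_self Z
  have hM1H : (M - 1)ᴴ = M - 1 := by
    rw [Matrix.conjTranspose_sub, hMherm.eq, Matrix.conjTranspose_one]
  have psd2 : (((1 + c : ℝ) : ℂ) • ((M - 1) * S * (M - 1))).PosSemidef := by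
    refine posSemidef_real_smul ?_ (by positivity)
    have h := hS.conjTranspose_mul_mul_same (M - 1)
    rwa [hM1H] at h
  have psd3 : ((c : ℂ) • ((1 : Matrix n n ℂ) - P)).PosSemidef :=
    posSemidef_real_smul hQ_psd hc.le
  have psd4 : (((2 * (1 + c) : ℝ) : ℂ) • (N - S)).PosSemidef :=
    posSemidef_real_smul hNS (by positivity)
  exact ((psd1.add psd2).add psd3).add psd4
end

section
/- For density operators ρ and τ with supp(ρ) ⊆ supp(τ), the quantum relative entropy is bounded below by the negative logarithm of the fidelity: D(ρ‖τ) ≥ −log₂ F(ρ,τ), where F(ρ,τ) = ‖√ρ √τ‖₁². -/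
open Matrix Kronecker ComplexOrder

section helpers
variable {n : Type*} [Fintype n] [DecidableEq n]

lemma matFun_eq {A : Matrix n n ℂ} (hA : A.IsHermitian) (f : ℝ → ℝ) :
    matFun f A = (hA.eigenvectorUnitary : Matrix n n ℂ) *
      Matrix.diagonal (fun i => (f (hA.eigenvalues i) : ℂ)) *
      star (hA.eigenvectorUnitary : Matrix n n ℂ) := by
  rw [matFun, dif_pos hA]

lemma trace_conj_unitary (U : Matrix.unitaryGroup n ℂ) (M : Matrix n n ℂ) :
    ((U : Matrix n n ℂ) * M * star (U : Matrix n n ℂ)).trace = M.trace := by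
  rw [Matrix.trace_mul_cycle]
  have h : star (U : Matrix n n ℂ) * (U : Matrix n n ℂ) = 1 :=
    Matrix.mem_unitaryGroup_iff'.mp U.2
  rw [h, Matrix.one_mul]

lemma trace_conj_unitary' (U : Matrix.unitaryGroup n ℂ) (M : Matrix n n ℂ) :
    (star (U : Matrix n n ℂ) * M * (U : Matrix n n ℂ)).trace = M.trace := by
  simpa using trace_conj_unitary (star U) M

end helpers

section master
variable {n : Type*} [Fintype n] [DecidableEq n]

lemma trace_matFun_mul_matFun {A B : Matrix n n ℂ} (hA : A.IsHermitian) (hB : B.IsHermitian)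
    (f g : ℝ → ℝ) :
    (matFun f A * matFun g B).trace =
      ((∑ i, ∑ j, f (hA.eigenvalues i) * g (hB.eigenvalues j) *
        Complex.normSq ((star (hA.eigenvectorUnitary : Matrix n n ℂ) *
          (hB.eigenvectorUnitary : Matrix n n ℂ)) i j) : ℝ) : ℂ) := by
  set U := (hA.eigenvectorUnitary : Matrix n n ℂ) with hU
  set V := (hB.eigenvectorUnitary : Matrix n n ℂ) with hV
  set W := star U * V with hW
  set Df := Matrix.diagonal (fun i => ((f (hA.eigenvalues i) : ℝ) : ℂ)) with hDf
  set Dg := Matrix.diagonal (fun j => ((g (hB.eigenvalues j) : ℝ) : ℂ)) with hDg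
  have hUU : U * star U = 1 := Matrix.mem_unitaryGroup_iff.mp hA.eigenvectorUnitary.2
  have key : matFun f A * matFun g B = U * (Df * W * Dg * star W) * star U := by
    rw [matFun_eq hA f, matFun_eq hB g, ← hU, ← hV, hW, StarMul.star_mul, star_star]
    simp only [Matrix.mul_assoc]
    rw [hUU, Matrix.mul_one]
  rw [key, trace_conj_unitary hA.eigenvectorUnitary]
  have entry : ∀ i j, (Df * W * Dg) i j = ((f (hA.eigenvalues i) : ℂ)) * W i j * (g (hB.eigenvalues j)) := by
    intro i j
    rw [Matrix.mul_diagonal, Matrix.diagonal_mul]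
  rw [Matrix.trace]
  push_cast
  apply Finset.sum_congr rfl
  intro i _
  rw [Matrix.diag, Matrix.mul_apply]
  apply Finset.sum_congr rfl
  intro j _
  rw [entry i j, Matrix.star_eq_conjTranspose, Matrix.conjTranspose_apply]
  have : (W i j) * star (W i j) = (Complex.normSq (W i j) : ℂ) := by
    rw [Complex.star_def, Complex.mul_conj]
  rw [← this]
  ring

end master

section tn
variable {n : Type*} [Fintype n] [DecidableEq n]

lemma cs_re (a b : n → ℂ) :
    (∑ k, (starRingEnd ℂ) (a k) * b k).re ≤
      Real.sqrt (∑ k, Complex.normSq (a k)) * Real.sqrt (∑ k, Complex.normSq (b k)) := by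
  have h1 : (∑ k, (starRingEnd ℂ) (a k) * b k).re ≤
      ∑ k, ‖a k‖ * ‖b k‖ := by
    rw [Complex.re_sum]
    apply Finset.sum_le_sum
    intro k _
    calc ((starRingEnd ℂ) (a k) * b k).re
        ≤ ‖(starRingEnd ℂ) (a k) * b k‖ := Complex.re_le_norm _
      _ = ‖a k‖ * ‖b k‖ := by rw [norm_mul, Complex.norm_conj]
  refine h1.trans ?_
  have h2 := Finset.sum_mul_sq_le_sq_mul_sq Finset.univ
    (fun k => ‖a k‖) (fun k => ‖b k‖)
  have h3 : ∑ k, ‖a k‖ * ‖b k‖ =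
      Real.sqrt ((∑ k, ‖a k‖ * ‖b k‖) ^ 2) :=
    (Real.sqrt_sq (by positivity)).symm
  rw [h3, ← Real.sqrt_mul (Finset.sum_nonneg fun k _ => Complex.normSq_nonneg _)]
  apply Real.sqrt_le_sqrt
  simpa [Complex.sq_norm] using h2

lemma re_trace_le_traceNorm (X : Matrix n n ℂ) : X.trace.re ≤ traceNorm X := by
  have hpsd := Matrix.posSemidef_conjTranspose_mul_self X
  have hH : (Xᴴ * X).IsHermitian := hpsd.1
  set U := (hH.eigenvectorUnitary : Matrix n n ℂ) with hU
  have hlam : ∀ i, 0 ≤ hH.eigenvalues i := hpsd.eigenvalues_nonneg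
  have hTN : traceNorm X = ∑ i, Real.sqrt (hH.eigenvalues i) := by
    rw [traceNorm, msqrt, matFun_eq hH, trace_conj_unitary hH.eigenvectorUnitary,
      Matrix.trace_diagonal, Complex.re_sum]
    simp
  have colX : ∀ i, ∑ k, Complex.normSq ((X * U) k i) = hH.eigenvalues i := by
    intro i
    have hd : star U * (Xᴴ * X) * U = diagonal (RCLike.ofReal ∘ hH.eigenvalues) := by
      have := hH.conjStarAlgAut_star_eigenvectorUnitary
      simp only [Unitary.conjStarAlgAut_apply, Unitary.coe_star, star_star] at this
      exact this
    have h2 : ((X * U)ᴴ * (X * U)) i i = ((hH.eigenvalues i : ℝ) : ℂ) := by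
      rw [Matrix.conjTranspose_mul, ← Matrix.star_eq_conjTranspose U, Matrix.mul_assoc,
        ← Matrix.mul_assoc Xᴴ X U, ← Matrix.mul_assoc (star U) (Xᴴ * X) U, hd]
      simp [Matrix.diagonal_apply_eq, Function.comp]
    have h3 : ((X * U)ᴴ * (X * U)) i i = ((∑ k, Complex.normSq ((X * U) k i) : ℝ) : ℂ) := by
      rw [Matrix.mul_apply]
      push_cast
      apply Finset.sum_congr rfl
      intro k _
      rw [Matrix.conjTranspose_apply, Complex.star_def, mul_comm, Complex.mul_conj]
    have := h3.symm.trans h2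
    exact_mod_cast this
  have colU : ∀ i, ∑ k, Complex.normSq (U k i) = 1 := by
    intro i
    have h : star U * U = 1 := Matrix.mem_unitaryGroup_iff'.mp hH.eigenvectorUnitary.2
    have h2 : (star U * U) i i = 1 := by rw [h, Matrix.one_apply_eq]
    rw [Matrix.mul_apply] at h2
    have h3 : ∑ k, (star U) i k * U k i = ((∑ k, Complex.normSq (U k i) : ℝ) : ℂ) := by
      push_cast
      apply Finset.sum_congr rfl
      intro k _
      rw [Matrix.star_eq_conjTranspose, Matrix.conjTranspose_apply, Complex.star_def,
        mul_comm, Complex.mul_conj]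
    rw [h3] at h2
    exact_mod_cast h2
  have htr : X.trace = (star U * X * U).trace := (trace_conj_unitary' hH.eigenvectorUnitary X).symm
  rw [htr, hTN, Matrix.trace, Complex.re_sum]
  refine Finset.sum_le_sum fun i _ => ?_
  have hdiag : Matrix.diag (star U * X * U) i = ∑ k, (starRingEnd ℂ) (U k i) * ((X * U) k i) := by
    rw [Matrix.diag, Matrix.mul_assoc, Matrix.mul_apply]
    apply Finset.sum_congr rfl
    intro k _
    rw [Matrix.star_eq_conjTranspose, Matrix.conjTranspose_apply, Complex.star_def]
  rw [hdiag]
  calc (∑ k, (starRingEnd ℂ) (U k i) * ((X * U) k i)).re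
      ≤ Real.sqrt (∑ k, Complex.normSq (U k i)) * Real.sqrt (∑ k, Complex.normSq ((X * U) k i)) :=
        cs_re _ _
    _ = Real.sqrt (hH.eigenvalues i) := by rw [colU, colX]; simp

end tn

section supp
variable {n : Type*} [Fintype n] [DecidableEq n]

lemma trace_eq_sum_eigs {ρ : Matrix n n ℂ} (hH : ρ.IsHermitian) :
    ρ.trace = ((∑ i, hH.eigenvalues i : ℝ) : ℂ) := by
  conv_lhs => rw [hH.spectral_theorem, Unitary.conjStarAlgAut_apply]
  rw [trace_conj_unitary hH.eigenvectorUnitary, Matrix.trace_diagonal]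
  push_cast
  rfl

lemma row_sum_one {ρ τ : Matrix n n ℂ} (hρ : ρ.IsHermitian) (hτ : τ.IsHermitian) (i : n) :
    ∑ j, Complex.normSq ((star (hρ.eigenvectorUnitary : Matrix n n ℂ) *
      (hτ.eigenvectorUnitary : Matrix n n ℂ)) i j) = 1 := by
  set U := (hρ.eigenvectorUnitary : Matrix n n ℂ) with hU
  set V := (hτ.eigenvectorUnitary : Matrix n n ℂ) with hV
  set W := star U * V with hWdef
  have hW : W * star W = 1 := by
    rw [hWdef, StarMul.star_mul, star_star]
    calc star U * V * (star V * U) = star U * (V * star V) * U := by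
          simp only [Matrix.mul_assoc]
      _ = 1 := by
          rw [Matrix.mem_unitaryGroup_iff.mp hτ.eigenvectorUnitary.2, Matrix.mul_one,
            Matrix.mem_unitaryGroup_iff'.mp hρ.eigenvectorUnitary.2]
  have h2 : (W * star W) i i = 1 := by rw [hW, Matrix.one_apply_eq]
  rw [Matrix.mul_apply] at h2
  have h3 : ∑ j, W i j * (star W) j i = ((∑ j, Complex.normSq (W i j) : ℝ) : ℂ) := by
    push_cast
    apply Finset.sum_congr rfl
    intro j _
    rw [Matrix.star_eq_conjTranspose, Matrix.conjTranspose_apply, Complex.star_def,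
      Complex.mul_conj]
  rw [h3] at h2
  exact_mod_cast h2

lemma supp_key {ρ τ : Matrix n n ℂ} (hρ : ρ.PosSemidef) (hτ : τ.IsHermitian)
    (hs : SuppLE ρ τ) {j : n} (hq : hτ.eigenvalues j = 0) (i : n) :
    hρ.1.eigenvalues i * Complex.normSq ((star (hρ.1.eigenvectorUnitary : Matrix n n ℂ) *
      (hτ.eigenvectorUnitary : Matrix n n ℂ)) i j) = 0 := by
  set U := (hρ.1.eigenvectorUnitary : Matrix n n ℂ) with hU
  set V := (hτ.eigenvectorUnitary : Matrix n n ℂ) with hV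
  set W := star U * V with hWdef
  set v : n → ℂ := ⇑(hτ.eigenvectorBasis j) with hv
  have hv0 : τ *ᵥ v = 0 := by
    rw [hv, hτ.mulVec_eigenvectorBasis, hq, zero_smul]
  have hρv : ρ *ᵥ v = 0 := hs v hv0
  have hcol : ∀ k, (ρ * V) k j = 0 := by
    intro k
    have : (ρ * V) k j = (ρ *ᵥ v) k := by
      rw [Matrix.mul_apply, Matrix.mulVec, dotProduct]
      apply Finset.sum_congr rfl
      intro l _
      congr 1
    rw [this, hρv]
    rfl
  have hzero : (star V * (ρ * V)) j j = 0 := by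
    rw [Matrix.mul_apply]
    apply Finset.sum_eq_zero
    intro k _
    rw [hcol k, mul_zero]
  have hform : (star V * (ρ * V)) j j =
      ((∑ i, hρ.1.eigenvalues i * Complex.normSq (W i j) : ℝ) : ℂ) := by
    conv_lhs => rw [hρ.1.spectral_theorem, Unitary.conjStarAlgAut_apply]
    have : star V * ((U * Matrix.diagonal (RCLike.ofReal ∘ hρ.1.eigenvalues) * star U) * V) =
        star W * Matrix.diagonal (RCLike.ofReal ∘ hρ.1.eigenvalues) * W := by
      rw [hWdef, StarMul.star_mul, star_star]
      simp only [Matrix.mul_assoc]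
    rw [this, Matrix.mul_apply]
    push_cast
    apply Finset.sum_congr rfl
    intro k _
    rw [Matrix.mul_diagonal, Matrix.star_eq_conjTranspose, Matrix.conjTranspose_apply]
    simp only [Complex.star_def]
    have hcast : ((RCLike.ofReal ∘ hρ.1.eigenvalues) k : ℂ) = ((hρ.1.eigenvalues k : ℝ) : ℂ) := rfl
    rw [hcast]
    have hterm : (starRingEnd ℂ) (W k j) * ((hρ.1.eigenvalues k : ℝ) : ℂ) * W k j
        = ((hρ.1.eigenvalues k : ℝ) : ℂ) * ((W k j) * (starRingEnd ℂ) (W k j)) := by ring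
    rw [hterm, Complex.mul_conj]
  rw [hform] at hzero
  have hsum : ∑ i, hρ.1.eigenvalues i * Complex.normSq (W i j) = 0 := by exact_mod_cast hzero
  have hnonneg : ∀ i ∈ Finset.univ, 0 ≤ hρ.1.eigenvalues i * Complex.normSq (W i j) :=
    fun i _ => mul_nonneg (hρ.eigenvalues_nonneg i) (Complex.normSq_nonneg _)
  exact (Finset.sum_eq_zero_iff_of_nonneg hnonneg).mp hsum i (Finset.mem_univ i)

end supp

section classic
open Finset

lemma logb_two_sqrt {x : ℝ} (hx : 0 ≤ x) :
    Real.logb 2 (Real.sqrt x) = Real.logb 2 x / 2 := by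
  rw [Real.logb, Real.logb, Real.log_sqrt hx]
  ring

lemma neg_sum_div_two {α : Type*} [Fintype α] (f : α → ℝ) :
    ∑ x, -f x / 2 = -(∑ x, f x) / 2 := by
  rw [← Finset.sum_div]
  congr 1
  simp

lemma classical_bound {ι κ : Type*} [Fintype ι] [Fintype κ] (p : ι → ℝ) (q : κ → ℝ)
    (c : ι → κ → ℝ)
    (hp : ∀ i, 0 ≤ p i) (hq : ∀ j, 0 ≤ q j) (hc : ∀ i j, 0 ≤ c i j)
    (hps : ∑ i, p i = 1) (hrow : ∀ i, ∑ j, c i j = 1)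
    (hsupp : ∀ j, q j = 0 → ∀ i, p i * c i j = 0)
    (S : ℝ) (hS : S = ∑ i, ∑ j, Real.sqrt (p i) * Real.sqrt (q j) * c i j) :
    0 < S ∧
      -(∑ i, ∑ j, (p i * c i j) * (Real.logb 2 (p i) - Real.logb 2 (q j))) / 2
        ≤ Real.logb 2 S := by
  classical
  set w : ι × κ → ℝ := fun x => p x.1 * c x.1 x.2 with hw
  set z : ι × κ → ℝ := fun x => Real.sqrt (q x.2) / Real.sqrt (p x.1) with hz
  set t : Finset (ι × κ) := Finset.univ.filter (fun x => w x ≠ 0) with ht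
  have hwnn : ∀ x, 0 ≤ w x := fun x => mul_nonneg (hp _) (hc _ _)
  have ht_mem : ∀ x ∈ t, 0 < p x.1 ∧ 0 < c x.1 x.2 ∧ 0 < q x.2 := by
    intro x hx
    have hx' : w x ≠ 0 := (Finset.mem_filter.mp hx).2
    have hp' : p x.1 ≠ 0 := fun h => hx' (by simp [hw, h])
    have hc' : c x.1 x.2 ≠ 0 := fun h => hx' (by simp [hw, h])
    have hq' : q x.2 ≠ 0 := fun h => hx' (hsupp _ h _)
    exact ⟨(hp _).lt_of_ne (Ne.symm hp'), (hc _ _).lt_of_ne (Ne.symm hc'),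
      (hq _).lt_of_ne (Ne.symm hq')⟩
  have hw_univ : ∑ x : ι × κ, w x = 1 := by
    rw [← Finset.univ_product_univ, Finset.sum_product]
    calc ∑ i, ∑ j, p i * c i j = ∑ i, p i * ∑ j, c i j := by
          refine Finset.sum_congr rfl fun i _ => ?_
          rw [Finset.mul_sum]
      _ = 1 := by simp only [hrow, mul_one, hps]
  have hw1 : ∑ x ∈ t, w x = 1 := by rw [ht, Finset.sum_filter_ne_zero, hw_univ]
  have hzpos : ∀ x ∈ t, 0 < z x := by
    intro x hx
    obtain ⟨h1, _, h3⟩ := ht_mem x hx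
    exact div_pos (Real.sqrt_pos.mpr h3) (Real.sqrt_pos.mpr h1)
  have hgm := Real.geom_mean_le_arith_mean_weighted t w z (fun x _ => hwnn x) hw1
    (fun x hx => (hzpos x hx).le)
  have hwz : ∀ x ∈ t, w x * z x = Real.sqrt (p x.1) * Real.sqrt (q x.2) * c x.1 x.2 := by
    intro x hx
    obtain ⟨h1, _, _⟩ := ht_mem x hx
    have hsp : Real.sqrt (p x.1) ≠ 0 := ne_of_gt (Real.sqrt_pos.mpr h1)
    have hself : Real.sqrt (p x.1) * Real.sqrt (p x.1) = p x.1 := Real.mul_self_sqrt (hp _)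
    have hwz' : w x * z x = (Real.sqrt (p x.1) * Real.sqrt (p x.1)) * c x.1 x.2 *
        (Real.sqrt (q x.2) / Real.sqrt (p x.1)) := by rw [hself]
    rw [hwz', div_eq_mul_inv,
      show Real.sqrt (p x.1) * Real.sqrt (p x.1) * c x.1 x.2 *
          (Real.sqrt (q x.2) * (Real.sqrt (p x.1))⁻¹) =
        (Real.sqrt (p x.1) * (Real.sqrt (p x.1))⁻¹) *
          (Real.sqrt (p x.1) * Real.sqrt (q x.2) * c x.1 x.2) from by ring,
      mul_inv_cancel₀ hsp, one_mul]
  have hSt : S = ∑ x ∈ t, w x * z x := by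
    calc S = ∑ x : ι × κ, Real.sqrt (p x.1) * Real.sqrt (q x.2) * c x.1 x.2 := by
          rw [hS, ← Finset.univ_product_univ, Finset.sum_product]
      _ = ∑ x ∈ t, Real.sqrt (p x.1) * Real.sqrt (q x.2) * c x.1 x.2 := by
          symm
          apply Finset.sum_subset (Finset.filter_subset _ _)
          intro x _ hx
          have hwx : w x = 0 := by
            by_contra h
            exact hx (Finset.mem_filter.mpr ⟨Finset.mem_univ x, h⟩)
          rcases mul_eq_zero.mp hwx with h | h
          · rw [h, Real.sqrt_zero, zero_mul, zero_mul]
          · rw [h, mul_zero]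
      _ = ∑ x ∈ t, w x * z x := (Finset.sum_congr rfl hwz).symm
  have hPpos : 0 < ∏ x ∈ t, z x ^ w x :=
    Finset.prod_pos fun x hx => Real.rpow_pos_of_pos (hzpos x hx) _
  have hPS : ∏ x ∈ t, z x ^ w x ≤ S := by rw [hSt]; exact hgm
  have hSpos : 0 < S := lt_of_lt_of_le hPpos hPS
  refine ⟨hSpos, ?_⟩
  have hlogP : Real.logb 2 (∏ x ∈ t, z x ^ w x) = ∑ x ∈ t, w x * Real.logb 2 (z x) := by
    rw [Real.logb, Real.log_prod (fun x hx => ne_of_gt (Real.rpow_pos_of_pos (hzpos x hx) _)),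
      Finset.sum_div]
    refine Finset.sum_congr rfl fun x hx => ?_
    rw [Real.log_rpow (hzpos x hx), Real.logb, mul_div_assoc]
  have hlogz : ∀ x ∈ t, w x * Real.logb 2 (z x) =
      -(w x * (Real.logb 2 (p x.1) - Real.logb 2 (q x.2))) / 2 := by
    intro x hx
    obtain ⟨h1, _, h3⟩ := ht_mem x hx
    rw [hz]
    rw [Real.logb_div (ne_of_gt (Real.sqrt_pos.mpr h3)) (ne_of_gt (Real.sqrt_pos.mpr h1)),
      logb_two_sqrt (hq _), logb_two_sqrt (hp _)]
    ring
  have hext : ∑ x ∈ t, -(w x * (Real.logb 2 (p x.1) - Real.logb 2 (q x.2))) / 2 =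
      ∑ x : ι × κ, -(w x * (Real.logb 2 (p x.1) - Real.logb 2 (q x.2))) / 2 := by
    apply Finset.sum_subset (Finset.filter_subset _ _)
    intro x _ hx
    have hwx : w x = 0 := by
      by_contra h
      exact hx (Finset.mem_filter.mpr ⟨Finset.mem_univ x, h⟩)
    rw [hwx, zero_mul, neg_zero, zero_div]
  calc -(∑ i, ∑ j, (p i * c i j) * (Real.logb 2 (p i) - Real.logb 2 (q j))) / 2
      = ∑ x : ι × κ, -(w x * (Real.logb 2 (p x.1) - Real.logb 2 (q x.2))) / 2 := by
        rw [neg_sum_div_two]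
        congr 2
        rw [← Finset.univ_product_univ, Finset.sum_product]
    _ = ∑ x ∈ t, -(w x * (Real.logb 2 (p x.1) - Real.logb 2 (q x.2))) / 2 := hext.symm
    _ = ∑ x ∈ t, w x * Real.logb 2 (z x) := (Finset.sum_congr rfl hlogz).symm
    _ = Real.logb 2 (∏ x ∈ t, z x ^ w x) := hlogP.symm
    _ ≤ Real.logb 2 S := Real.logb_le_logb_of_le one_lt_two hPpos hPS

end classic

section mainhelp
variable {n : Type*} [Fintype n] [DecidableEq n]

lemma matFun_id {A : Matrix n n ℂ} (hA : A.IsHermitian) : matFun (fun x => x) A = A := by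
  rw [matFun_eq hA]
  exact hA.spectral_theorem.symm

lemma trace_mul_matFun {A B : Matrix n n ℂ} (hA : A.IsHermitian) (hB : B.IsHermitian)
    (g : ℝ → ℝ) :
    (A * matFun g B).trace =
      ((∑ i, ∑ j, hA.eigenvalues i * g (hB.eigenvalues j) *
        Complex.normSq ((star (hA.eigenvectorUnitary : Matrix n n ℂ) *
          (hB.eigenvectorUnitary : Matrix n n ℂ)) i j) : ℝ) : ℂ) := by
  conv_lhs => rw [← matFun_id hA]
  exact trace_matFun_mul_matFun hA hB _ g

lemma trace_self_matFun {A : Matrix n n ℂ} (hA : A.IsHermitian) (g : ℝ → ℝ) :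
    (A * matFun g A).trace =
      ((∑ i, hA.eigenvalues i * g (hA.eigenvalues i) : ℝ) : ℂ) := by
  rw [trace_mul_matFun hA hA g]
  have h1 : star (hA.eigenvectorUnitary : Matrix n n ℂ) *
      (hA.eigenvectorUnitary : Matrix n n ℂ) = 1 :=
    Matrix.mem_unitaryGroup_iff'.mp hA.eigenvectorUnitary.2
  rw [h1]
  norm_cast
  apply Finset.sum_congr rfl
  intro i _
  rw [Finset.sum_eq_single i]
  · rw [Matrix.one_apply_eq]; norm_num
  · intro j _ hj
    rw [Matrix.one_apply_ne (Ne.symm hj)]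
    simp
  · intro h; exact absurd (Finset.mem_univ i) h

end mainhelp

/-- Relative entropy is bounded below by the negative log-fidelity. -/
theorem relEnt_ge_neg_log_fid {n : Type*} [Fintype n] [DecidableEq n]
    (ρ τ : Matrix n n ℂ) (hρ : IsDensity ρ) (hτ : IsDensity τ)
    (hsupp : SuppLE ρ τ) :
    relEnt ρ τ ≥ -Real.logb 2 (fid ρ τ) := by
  classical
  obtain ⟨hρP, hρtr⟩ := hρ
  obtain ⟨hτP, hτtr⟩ := hτ
  have hρH : ρ.IsHermitian := hρP.1
  have hτH : τ.IsHermitian := hτP.1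
  set p : n → ℝ := hρH.eigenvalues with hp_def
  set q : n → ℝ := hτH.eigenvalues with hq_def
  set W : Matrix n n ℂ := star (hρH.eigenvectorUnitary : Matrix n n ℂ) *
    (hτH.eigenvectorUnitary : Matrix n n ℂ) with hW_def
  set c : n → n → ℝ := fun i j => Complex.normSq (W i j) with hc_def
  have hp0 : ∀ i, 0 ≤ p i := hρP.eigenvalues_nonneg
  have hq0 : ∀ j, 0 ≤ q j := hτP.eigenvalues_nonneg
  have hc0 : ∀ i j, 0 ≤ c i j := fun i j => Complex.normSq_nonneg _
  have hps : ∑ i, p i = 1 := by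
    have := trace_eq_sum_eigs hρH
    rw [hρtr] at this
    exact_mod_cast this.symm
  have hrow : ∀ i, ∑ j, c i j = 1 := row_sum_one hρH hτH
  have hsc : ∀ j, q j = 0 → ∀ i, p i * c i j = 0 := fun j hq i => supp_key hρP hτH hsupp hq i
  -- relative entropy formula
  have hrel : relEnt ρ τ = ∑ i, ∑ j, (p i * c i j) * (Real.logb 2 (p i) - Real.logb 2 (q j)) := by
    rw [relEnt, Matrix.mul_sub, Matrix.trace_sub, Complex.sub_re, mlog, mlog,
      trace_self_matFun hρH, trace_mul_matFun hρH hτH, Complex.ofReal_re, Complex.ofReal_re]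
    rw [show ∑ i, p i * Real.logb 2 (p i) =
        ∑ i, ∑ j, (p i * c i j) * Real.logb 2 (p i) from ?_]
    · rw [← Finset.sum_sub_distrib]
      apply Finset.sum_congr rfl
      intro i _
      rw [← Finset.sum_sub_distrib]
      apply Finset.sum_congr rfl
      intro j _
      ring
    · apply Finset.sum_congr rfl
      intro i _
      rw [show ∑ j, (p i * c i j) * Real.logb 2 (p i) =
          (∑ j, c i j) * (p i * Real.logb 2 (p i)) from ?_]
      · rw [hrow i, one_mul]
      · rw [Finset.sum_mul]
        apply Finset.sum_congr rfl
        intro j _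
        ring
  -- fidelity bound
  set S : ℝ := ∑ i, ∑ j, Real.sqrt (p i) * Real.sqrt (q j) * c i j with hS_def
  have hS_trace : (msqrt ρ * msqrt τ).trace.re = S := by
    rw [msqrt, msqrt, trace_matFun_mul_matFun hρH hτH, Complex.ofReal_re]
  have hS_le : S ≤ sqrtFid ρ τ := by
    rw [← hS_trace, sqrtFid]
    exact re_trace_le_traceNorm _
  obtain ⟨hSpos, hlog⟩ := classical_bound p q c hp0 hq0 hc0 hps hrow hsc S hS_def
  rw [← hrel] at hlog
  have hsfpos : 0 < sqrtFid ρ τ := lt_of_lt_of_le hSpos hS_le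
  have h1 : Real.logb 2 S ≤ Real.logb 2 (sqrtFid ρ τ) :=
    Real.logb_le_logb_of_le one_lt_two hSpos hS_le
  have h2 : Real.logb 2 (fid ρ τ) = 2 * Real.logb 2 (sqrtFid ρ τ) := by
    rw [fid, Real.logb_pow]
    norm_num
  rw [ge_iff_le, h2]
  linarith
end

section
/- Let ρ_{XB} = Σ_x p(x)|x⟩⟨x|_X ⊗ |ψ^x⟩⟨ψ^x|_B be a classical–quantum state with pure conditional states, and define the relative entropy variance V(X;B) = Tr{ρ_{XB}[log₂ρ_{XB} − log₂(ρ_X⊗ρ_B) − I(X;B)]²}. Then V(X;B) equals the entropy variance of the average state: V(X;B) = Tr{ρ_B[−log₂ρ_B − H(ρ_B)]²}, where ρ_B = Σ_x p(x)|ψ^x⟩⟨ψ^x| and H(ρ_B) = −Tr{ρ_B log₂ρ_B}. -/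
open Matrix Kronecker ComplexOrder

section myhelpers
set_option linter.unusedSectionVars false

noncomputable def tensV {a b : Type*} (u : a → ℂ) (v : b → ℂ) : a × b → ℂ :=
  fun q => u q.1 * v q.2

variable {a b n : Type*} [Fintype a] [Fintype b] [Fintype n] [DecidableEq n]

lemma matFun_isHermitian (f : ℝ → ℝ) (A : Matrix n n ℂ) : (matFun f A).IsHermitian := by
  unfold matFun
  split
  · rename_i hA
    have hD : (Matrix.diagonal (fun i => (f (hA.eigenvalues i) : ℂ))).IsHermitian := by
      rw [Matrix.isHermitian_diagonal_iff]
      intro i; exact Complex.conj_ofReal _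
    have := Matrix.isHermitian_mul_mul_conjTranspose
      (hA.eigenvectorUnitary : Matrix n n ℂ) hD
    simpa [Matrix.star_eq_conjTranspose, mul_assoc] using this
  · exact Matrix.isHermitian_zero

lemma matFun_mulVec (f : ℝ → ℝ) {A : Matrix n n ℂ} (hA : A.IsHermitian)
    {v : n → ℂ} {t : ℝ} (hv : A *ᵥ v = (t : ℂ) • v) :
    matFun f A *ᵥ v = ((f t : ℝ) : ℂ) • v := by
  set V : Matrix n n ℂ := (hA.eigenvectorUnitary : Matrix n n ℂ) with hV
  have hVsV : Vᴴ * V = 1 := by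
    simpa [Matrix.star_eq_conjTranspose] using Unitary.coe_star_mul_self hA.eigenvectorUnitary
  have hVVs : V * Vᴴ = 1 := by
    simpa [Matrix.star_eq_conjTranspose] using Unitary.coe_mul_star_self hA.eigenvectorUnitary
  set w : n → ℂ := Vᴴ *ᵥ v with hw
  have hspec : A = V * Matrix.diagonal (fun i => (hA.eigenvalues i : ℂ)) * Vᴴ := by
    simpa [Matrix.star_eq_conjTranspose, Function.comp_def, hV] using hA.spectral_theorem
  have hDw : Matrix.diagonal (fun i => (hA.eigenvalues i : ℂ)) *ᵥ w = (t : ℂ) • w := by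
    have h1 : (V * Matrix.diagonal (fun i => (hA.eigenvalues i : ℂ)) * Vᴴ) *ᵥ v = (t : ℂ) • v := by
      rw [← hspec]; exact hv
    have h2 := congrArg (fun x => Vᴴ *ᵥ x) h1
    simp only [Matrix.mulVec_mulVec, Matrix.mulVec_smul] at h2
    rw [show Vᴴ * (V * Matrix.diagonal (fun i => (hA.eigenvalues i : ℂ)) * Vᴴ)
        = Matrix.diagonal (fun i => (hA.eigenvalues i : ℂ)) * Vᴴ by
      rw [← Matrix.mul_assoc, ← Matrix.mul_assoc, hVsV, Matrix.one_mul]] at h2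
    simpa [hw, Matrix.mulVec_mulVec] using h2
  have hfDw : Matrix.diagonal (fun i => ((f (hA.eigenvalues i) : ℝ) : ℂ)) *ᵥ w
      = ((f t : ℝ) : ℂ) • w := by
    funext i
    have h1 : (hA.eigenvalues i : ℂ) * w i = (t : ℂ) * w i := by
      have := congrFun hDw i
      simpa [Matrix.mulVec_diagonal] using this
    by_cases hwi : w i = 0
    · simp [Matrix.mulVec_diagonal, hwi]
    · have hcast : (hA.eigenvalues i : ℂ) = (t : ℂ) := mul_right_cancel₀ hwi h1
      have ht : hA.eigenvalues i = t := by exact_mod_cast hcast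
      simp [Matrix.mulVec_diagonal, ht, Pi.smul_apply, smul_eq_mul]
  calc matFun f A *ᵥ v
      = V *ᵥ (Matrix.diagonal (fun i => ((f (hA.eigenvalues i) : ℝ) : ℂ)) *ᵥ w) := by
        simp [matFun, dif_pos hA, ← hV, Matrix.star_eq_conjTranspose, hw,
          Matrix.mulVec_mulVec, Matrix.mul_assoc]
    _ = ((f t : ℝ) : ℂ) • (V *ᵥ (Vᴴ *ᵥ v)) := by rw [hfDw]; simp [Matrix.mulVec_smul, hw]
    _ = ((f t : ℝ) : ℂ) • v := by simp [Matrix.mulVec_mulVec, hVVs]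

lemma kron_mulVec (A : Matrix a a ℂ) (B : Matrix b b ℂ) (u : a → ℂ) (v : b → ℂ) :
    (A ⊗ₖ B) *ᵥ tensV u v = tensV (A *ᵥ u) (B *ᵥ v) := by
  funext q
  obtain ⟨i, j⟩ := q
  simp only [tensV, Matrix.mulVec, dotProduct, Fintype.sum_prod_type,
    Matrix.kroneckerMap_apply]
  rw [Finset.sum_mul_sum]
  exact Finset.sum_congr rfl fun k _ => Finset.sum_congr rfl fun l _ => by ring

lemma star_tensV (u : a → ℂ) (v : b → ℂ) : star (tensV u v) = tensV (star u) (star v) := by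
  funext q; simp [tensV, Pi.star_apply, mul_comm]

lemma dot_tensV (u u' : a → ℂ) (v v' : b → ℂ) :
    tensV u v ⬝ᵥ tensV u' v' = (u ⬝ᵥ u') * (v ⬝ᵥ v') := by
  simp only [dotProduct, tensV, Fintype.sum_prod_type]
  rw [Finset.sum_mul_sum]
  exact Finset.sum_congr rfl fun k _ => Finset.sum_congr rfl fun l _ => by ring

lemma vecMulVec_mulVec' (u c x : n → ℂ) :
    Matrix.vecMulVec u c *ᵥ x = (c ⬝ᵥ x) • u := by
  funext i
  simp only [Matrix.mulVec, dotProduct, Matrix.vecMulVec_apply, Pi.smul_apply,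
    smul_eq_mul, Finset.mul_sum, Finset.sum_mul]
  exact Finset.sum_congr rfl fun k _ => by ring

lemma trace_vecMulVec_mul (u c : n → ℂ) (M : Matrix n n ℂ) :
    (Matrix.vecMulVec u c * M).trace = c ⬝ᵥ (M *ᵥ u) := by
  simp only [Matrix.trace, Matrix.diag, Matrix.mul_apply, Matrix.vecMulVec_apply,
    dotProduct, Matrix.mulVec, Finset.mul_sum]
  rw [Finset.sum_comm]
  exact Finset.sum_congr rfl fun k _ => Finset.sum_congr rfl fun i _ => by ring

lemma herm_dot_swap {M : Matrix n n ℂ} (hM : M.IsHermitian) (x y : n → ℂ) :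
    star x ⬝ᵥ (M *ᵥ y) = star (M *ᵥ x) ⬝ᵥ y := by
  rw [Matrix.star_mulVec, Matrix.dotProduct_mulVec, hM.eq]

lemma smul_one_mulVec (r : ℝ) (x : n → ℂ) :
    (r • (1 : Matrix n n ℂ)) *ᵥ x = (r : ℂ) • x := by
  funext i
  simp [Matrix.mulVec, dotProduct, Matrix.one_apply, Finset.mul_sum, apply_ite,
    Complex.real_smul]

lemma mulVec_sum' {ι : Type*} (s : Finset ι) (M : Matrix n n ℂ) (g : ι → n → ℂ) :
    M *ᵥ (∑ j ∈ s, g j) = ∑ j ∈ s, M *ᵥ g j := by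
  rw [show (M *ᵥ ∑ j ∈ s, g j) = M.mulVecLin (∑ j ∈ s, g j) from rfl, map_sum]
  rfl

lemma sum_mulVec' {ι : Type*} (s : Finset ι) (M : ι → Matrix n n ℂ) (x : n → ℂ) :
    (∑ i ∈ s, M i) *ᵥ x = ∑ i ∈ s, M i *ᵥ x := by
  funext k
  simp only [Matrix.mulVec, dotProduct, Finset.sum_apply, Matrix.sum_apply,
    Finset.sum_mul]
  exact Finset.sum_comm

lemma star_sum_smul_dot {ι : Type*} [Fintype ι] (γ : ι → ℂ) (w : ι → n → ℂ) (y : n → ℂ) :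
    star (∑ j, γ j • w j) ⬝ᵥ y = ∑ j, (starRingEnd ℂ) (γ j) * (star (w j) ⬝ᵥ y) := by
  simp only [dotProduct, Pi.star_apply, Finset.sum_apply, Pi.smul_apply, smul_eq_mul,
    star_sum, star_mul', Finset.sum_mul, Finset.mul_sum]
  rw [Finset.sum_comm]
  refine Finset.sum_congr rfl fun j _ => Finset.sum_congr rfl fun i _ => ?_
  simp [RingHom.coe_comp, mul_comm, mul_left_comm, mul_assoc]

lemma dot_sum_smul {ι : Type*} [Fintype ι] (δ : ι → ℂ) (w : ι → n → ℂ) (y : n → ℂ) :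
    y ⬝ᵥ (∑ k, δ k • w k) = ∑ k, δ k * (y ⬝ᵥ w k) := by
  simp only [dotProduct, Finset.sum_apply, Pi.smul_apply, smul_eq_mul, Finset.mul_sum]
  rw [Finset.sum_comm]
  exact Finset.sum_congr rfl fun j _ => Finset.sum_congr rfl fun i _ => by ring

lemma dot_sum'' {ι : Type*} (s : Finset ι) (y : n → ℂ) (g : ι → n → ℂ) :
    y ⬝ᵥ (∑ k ∈ s, g k) = ∑ k ∈ s, y ⬝ᵥ g k := by
  simp only [dotProduct, Finset.sum_apply, Finset.mul_sum]
  exact Finset.sum_comm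

lemma dot_sum_ortho {ι : Type*} [Fintype ι] [DecidableEq ι] (w : ι → n → ℂ)
    (hw : ∀ j k, star (w j) ⬝ᵥ w k = if j = k then 1 else 0) (γ δ : ι → ℂ) :
    star (∑ j, γ j • w j) ⬝ᵥ (∑ k, δ k • w k) = ∑ j, (starRingEnd ℂ) (γ j) * δ j := by
  rw [star_sum_smul_dot]
  refine Finset.sum_congr rfl fun j _ => ?_
  rw [dot_sum_smul]
  have : ∀ k, δ k * (star (w j) ⬝ᵥ w k) = if k = j then δ j else 0 := by
    intro k
    rw [hw]
    by_cases h : j = k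
    · subst h; simp
    · simp [h, Ne.symm h, fun h' : k = j => h h'.symm]
  simp only [this, Finset.sum_ite_eq' Finset.univ j (fun _ => δ j), Finset.mem_univ, if_pos]

lemma isHermitian_sum' {ι : Type*} (s : Finset ι) (f : ι → Matrix n n ℂ)
    (h : ∀ i ∈ s, (f i).IsHermitian) : (∑ i ∈ s, f i).IsHermitian := by
  rw [Matrix.IsHermitian, Matrix.conjTranspose_sum]
  exact Finset.sum_congr rfl h

lemma isHermitian_real_smul (r : ℝ) {M : Matrix n n ℂ} (h : M.IsHermitian) :
    (r • M).IsHermitian := by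
  rw [Matrix.IsHermitian, Matrix.conjTranspose_smul, star_trivial, h.eq]

lemma isHermitian_vecMulVec_star (v : n → ℂ) : (Matrix.vecMulVec v (star v)).IsHermitian := by
  rw [Matrix.IsHermitian]
  ext i j
  simp [Matrix.conjTranspose_apply, Matrix.vecMulVec_apply, mul_comm]

lemma kron_isHermitian [DecidableEq a] [DecidableEq b] {A : Matrix a a ℂ} {B : Matrix b b ℂ}
    (hA : A.IsHermitian) (hB : B.IsHermitian) :
    (Matrix.kroneckerMap (· * ·) A B).IsHermitian := by
  rw [Matrix.IsHermitian]
  ext ⟨i, j⟩ ⟨i', j'⟩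
  simp only [Matrix.conjTranspose_apply, Matrix.kroneckerMap_apply, star_mul']
  rw [mul_comm, ← Matrix.conjTranspose_apply, ← Matrix.conjTranspose_apply, hA.eq, hB.eq,
    mul_comm]

lemma trace_ens {X : Type*} [Fintype X] (p : X → ℝ) (v : X → n → ℂ) (M : Matrix n n ℂ) :
    ((∑ x, p x • Matrix.vecMulVec (v x) (star (v x))) * M).trace
      = ∑ x, (p x : ℂ) * (star (v x) ⬝ᵥ (M *ᵥ v x)) := by
  rw [Finset.sum_mul, Matrix.trace_sum]
  refine Finset.sum_congr rfl fun x _ => ?_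
  rw [smul_mul_assoc, Matrix.trace_smul, trace_vecMulVec_mul]
  simp [Complex.real_smul]

end myhelpers

/-- For a pure-state cq ensemble, the relative entropy variance equals
the entropy variance of the average state. -/
theorem pure_cq_variance_eq_entropy_variance {X b : Type*} [Fintype X] [DecidableEq X]
    [Fintype b] [DecidableEq b]
    (p : X → ℝ) (hp : ∀ x, 0 < p x) (hp1 : ∑ x, p x = 1)
    (ψ : X → b → ℂ) (hψ : ∀ x, star (ψ x) ⬝ᵥ ψ x = 1)
    (ρXB : Matrix (X × b) (X × b) ℂ)
    (hρXB : ρXB = ∑ x, p x •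
      (Matrix.single x x (1 : ℂ) ⊗ₖ Matrix.vecMulVec (ψ x) (star (ψ x))))
    (ρX : Matrix X X ℂ) (hρX : ρX = Matrix.diagonal fun x => (p x : ℂ))
    (ρB : Matrix b b ℂ) (hρB : ρB = ∑ x, p x • Matrix.vecMulVec (ψ x) (star (ψ x))) :
    (ρXB * (mlog ρXB - mlog (ρX ⊗ₖ ρB) -
        relEnt ρXB (ρX ⊗ₖ ρB) • (1 : Matrix (X × b) (X × b) ℂ)) ^ 2).trace.re
      = (ρB * (-(mlog ρB) - vnEntropy ρB • (1 : Matrix b b ℂ)) ^ 2).trace.re := by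
  classical
  -- Hermitian structure of ρB
  have hψ' : ∀ x, star (ψ x) ⬝ᵥ ψ x = 1 := hψ
  have hBH : ρB.IsHermitian := by
    rw [hρB]
    exact isHermitian_sum' _ _ fun x _ =>
      isHermitian_real_smul _ (isHermitian_vecMulVec_star _)
  -- eigen data of ρB
  set V : Matrix b b ℂ := (hBH.eigenvectorUnitary : Matrix b b ℂ) with hVdef
  set μ : b → ℝ := hBH.eigenvalues with hμdef
  set u : b → b → ℂ := fun j i => V i j with hudef
  set e : X → X → ℂ := fun x y => if y = x then 1 else 0 with hedef
  set v : X → X × b → ℂ := fun x => tensV (e x) (ψ x) with hvdef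
  set w : X → b → X × b → ℂ := fun x j => tensV (e x) (u j) with hwdef
  set cc : X → b → ℂ := fun x j => star (u j) ⬝ᵥ ψ x with hccdef
  have hVsV : Vᴴ * V = 1 := by
    simpa [Matrix.star_eq_conjTranspose] using Unitary.coe_star_mul_self hBH.eigenvectorUnitary
  have hVVs : V * Vᴴ = 1 := by
    simpa [Matrix.star_eq_conjTranspose] using Unitary.coe_mul_star_self hBH.eigenvectorUnitary
  have huu : ∀ j k, star (u j) ⬝ᵥ u k = if j = k then 1 else 0 := by
    intro j k
    have h := congrFun (congrFun hVsV j) k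
    simpa [Matrix.mul_apply, Matrix.one_apply, Matrix.conjTranspose_apply, hudef,
      dotProduct] using h
  have hee : ∀ x y, star (e x) ⬝ᵥ e y = if x = y then (1:ℂ) else 0 := by
    intro x y
    by_cases hxy : x = y
    · subst hxy
      simp [hedef, dotProduct, apply_ite, Finset.sum_ite_eq']
    · simp only [hedef, dotProduct, Pi.star_apply]
      rw [if_neg hxy, Finset.sum_eq_zero]
      intro z _
      by_cases hzx : z = x
      · subst hzx; simp [fun h : z = y => hxy h]
      · simp [hzx]
  have hww : ∀ x j k, star (w x j) ⬝ᵥ w x k = if j = k then (1:ℂ) else 0 := by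
    intro x j k
    rw [hwdef]
    simp only
    rw [star_tensV, dot_tensV, huu]
    have := hee x x
    rw [if_pos rfl] at this
    rw [this, one_mul]
  have hvv : ∀ x y, star (v x) ⬝ᵥ v y = if x = y then (1:ℂ) else 0 := by
    intro x y
    rw [hvdef]
    simp only
    rw [star_tensV, dot_tensV, hee]
    by_cases hxy : x = y
    · subst hxy; simp [hψ' x]
    · simp [hxy]
  -- eigen equation for ρB
  have heigB : ∀ j, ρB *ᵥ u j = ((μ j : ℝ) : ℂ) • u j := by
    intro j
    have hspec : ρB = V * Matrix.diagonal (fun i => (μ i : ℂ)) * Vᴴ := by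
      simpa [Matrix.star_eq_conjTranspose, Function.comp_def, hVdef, hμdef] using hBH.spectral_theorem
    have hBV : ρB * V = V * Matrix.diagonal (fun i => (μ i : ℂ)) := by
      rw [hspec, Matrix.mul_assoc, hVsV, Matrix.mul_one]
    funext i
    have h := congrFun (congrFun hBV i) j
    rw [Matrix.mul_diagonal] at h
    simp only [Matrix.mul_apply] at h
    rw [mul_comm] at h
    simpa [Matrix.mulVec, dotProduct, hudef, Pi.smul_apply, smul_eq_mul, mul_comm] using h
  -- ensemble form of ρXB
  have hρXB' : ρXB = ∑ x, p x • Matrix.vecMulVec (v x) (star (v x)) := by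
    rw [hρXB]
    refine Finset.sum_congr rfl fun x _ => ?_
    congr 1
    have hstar_e : ∀ i, star (e x i) = e x i := by
      intro i
      simp only [hedef]
      by_cases h : i = x <;> simp [h]
    have hstd : ∀ i i', Matrix.single x x (1 : ℂ) i i' = e x i * e x i' := by
      intro i i'
      simp only [Matrix.single, Matrix.of_apply, hedef]
      by_cases h1 : i = x
      · by_cases h2 : i' = x
        · subst h1; subst h2; simp
        · rw [if_neg (fun hc => h2 hc.2.symm)]; simp [h2]
      · rw [if_neg (fun hc => h1 hc.1.symm)]; simp [h1]
    ext ⟨i, j⟩ ⟨i', j'⟩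
    simp only [Matrix.kroneckerMap_apply, Matrix.vecMulVec_apply, hvdef, tensV,
      Pi.star_apply, star_mul', hstd i i', hstar_e]
    ring
  -- eigen equation for ρXB
  have heigXB : ∀ x, ρXB *ᵥ v x = ((p x : ℝ) : ℂ) • v x := by
    intro x
    rw [hρXB', sum_mulVec']
    have hterm : ∀ y, (p y • Matrix.vecMulVec (v y) (star (v y))) *ᵥ v x
        = (if y = x then ((p y : ℝ) : ℂ) • v y else 0) := by
      intro y
      rw [Matrix.smul_mulVec, vecMulVec_mulVec', hvv y x]
      by_cases hyx : y = x
      · subst hyx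
        rw [if_pos rfl, if_pos rfl, one_smul]
        funext i
        simp [Pi.smul_apply, Complex.real_smul]
      · simp [hyx]
    simp only [hterm]
    rw [Finset.sum_ite_eq' Finset.univ x (fun y => ((p y : ℝ) : ℂ) • v y)]
    simp
  -- decomposition of ψ in the eigenbasis
  have hψdecomp : ∀ x, ψ x = ∑ j, cc x j • u j := by
    intro x
    have h1 : V *ᵥ (Vᴴ *ᵥ ψ x) = ψ x := by
      rw [Matrix.mulVec_mulVec, hVVs, Matrix.one_mulVec]
    funext i
    have h2 := congrFun h1 i
    simp only [Matrix.mulVec, dotProduct, Matrix.conjTranspose_apply] at h2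
    rw [← h2]
    simp only [Finset.sum_apply, Pi.smul_apply, smul_eq_mul, hccdef, hudef, dotProduct,
      Pi.star_apply]
    exact Finset.sum_congr rfl fun j _ => by ring
  have hvw : ∀ x, v x = ∑ j, cc x j • w x j := by
    intro x
    rw [hvdef]
    simp only
    rw [hψdecomp x]
    funext q
    obtain ⟨i, j2⟩ := q
    simp only [tensV, hwdef, Finset.sum_apply, Pi.smul_apply, smul_eq_mul, Finset.mul_sum]
    exact Finset.sum_congr rfl fun j _ => by ring
  have hρXe : ∀ x, ρX *ᵥ e x = ((p x : ℝ) : ℂ) • e x := by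
    intro x
    rw [hρX]
    funext y
    simp only [Matrix.mulVec_diagonal, hedef, Pi.smul_apply, smul_eq_mul]
    by_cases h : y = x
    · subst h; simp
    · simp [h]
  have heigσ : ∀ x j, (ρX ⊗ₖ ρB) *ᵥ w x j = ((p x * μ j : ℝ) : ℂ) • w x j := by
    intro x j
    rw [hwdef]
    simp only
    rw [kron_mulVec, hρXe x, heigB j]
    funext q
    simp only [tensV, Pi.smul_apply, smul_eq_mul]
    push_cast
    ring
  -- Hermiticity
  have hXBH : ρXB.IsHermitian := by
    rw [hρXB']
    exact isHermitian_sum' _ _ fun x _ =>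
      isHermitian_real_smul _ (isHermitian_vecMulVec_star _)
  have hρXH : ρX.IsHermitian := by
    rw [hρX, Matrix.isHermitian_diagonal_iff]
    intro i
    exact Complex.conj_ofReal _
  have hσH : (ρX ⊗ₖ ρB).IsHermitian := kron_isHermitian hρXH hBH
  -- spectral calculus actions
  have hml1 : ∀ x, mlog ρXB *ᵥ v x = ((Real.logb 2 (p x) : ℝ) : ℂ) • v x :=
    fun x => matFun_mulVec _ hXBH (heigXB x)
  have hml2 : ∀ x j, mlog (ρX ⊗ₖ ρB) *ᵥ w x j = ((Real.logb 2 (p x * μ j) : ℝ) : ℂ) • w x j :=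
    fun x j => matFun_mulVec _ hσH (heigσ x j)
  have hml3 : ∀ j, mlog ρB *ᵥ u j = ((Real.logb 2 (μ j) : ℝ) : ℂ) • u j :=
    fun j => matFun_mulVec _ hBH (heigB j)
  -- vanishing overlaps on the kernel of ρB
  have hconj : ∀ y j, star (ψ y) ⬝ᵥ u j = (starRingEnd ℂ) (cc y j) := by
    intro y j
    simp only [hccdef, dotProduct, map_sum, Pi.star_apply, star_mul', RingHomCompTriple.comp_apply]
    refine Finset.sum_congr rfl fun i _ => ?_
    simp [mul_comm]
  have hcz : ∀ z : ℂ, (starRingEnd ℂ) z * z = ((Complex.normSq z : ℝ) : ℂ) := by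
    intro z
    rw [mul_comm]
    exact Complex.mul_conj z
  have hczero : ∀ j, μ j = 0 → ∀ x, cc x j = 0 := by
    intro j hμ0 x
    have h0 : ρB *ᵥ u j = 0 := by
      rw [heigB j, hμ0]
      simp
    have h2 : star (u j) ⬝ᵥ (ρB *ᵥ u j) = ∑ y, ((p y * Complex.normSq (cc y j) : ℝ) : ℂ) := by
      rw [hρB, sum_mulVec', dot_sum'']
      refine Finset.sum_congr rfl fun y _ => ?_
      rw [Matrix.smul_mulVec, vecMulVec_mulVec']
      rw [dotProduct_smul, dotProduct_smul, hconj y j,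
        show star (u j) ⬝ᵥ ψ y = cc y j from rfl, smul_eq_mul, hcz (cc y j)]
      push_cast
      simp [Complex.real_smul]
    rw [h0] at h2
    have h3 : (0 : ℂ) = ((∑ y, p y * Complex.normSq (cc y j) : ℝ) : ℂ) := by
      rw [Complex.ofReal_sum]
      simpa [dotProduct] using h2
    have h4 : ∑ y, p y * Complex.normSq (cc y j) = 0 := by exact_mod_cast h3.symm
    have h5 := (Finset.sum_eq_zero_iff_of_nonneg (fun y _ =>
      mul_nonneg (hp y).le (Complex.normSq_nonneg _))).mp h4 x (Finset.mem_univ x)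
    have h6 : Complex.normSq (cc x j) = 0 := by
      rcases mul_eq_zero.mp h5 with h | h
      · exact absurd h (hp x).ne'
      · exact h
    exact Complex.normSq_eq_zero.mp h6
  -- abbreviations for the mean values
  set D : ℝ := relEnt ρXB (ρX ⊗ₖ ρB) with hDdef
  set H : ℝ := vnEntropy ρB with hHdef
  set L : Matrix (X × b) (X × b) ℂ :=
    mlog ρXB - mlog (ρX ⊗ₖ ρB) - D • (1 : Matrix (X × b) (X × b) ℂ) with hLdef
  set N : Matrix b b ℂ := -(mlog ρB) - H • (1 : Matrix b b ℂ) with hNdef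
  have hLH : L.IsHermitian := by
    rw [hLdef]
    exact ((matFun_isHermitian _ _).sub (matFun_isHermitian _ _)).sub
      (isHermitian_real_smul _ Matrix.isHermitian_one)
  have hNH : N.IsHermitian := by
    rw [hNdef]
    exact ((matFun_isHermitian _ _).neg).sub (isHermitian_real_smul _ Matrix.isHermitian_one)
  -- action of L on the ensemble vectors
  have hLv : ∀ x, L *ᵥ v x
      = ∑ j, (cc x j * ((Real.logb 2 (p x) - Real.logb 2 (p x * μ j) - D : ℝ) : ℂ)) • w x j := by
    intro x
    have hterm2 : mlog (ρX ⊗ₖ ρB) *ᵥ v x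
        = ∑ j, (cc x j * ((Real.logb 2 (p x * μ j) : ℝ) : ℂ)) • w x j := by
      conv_lhs => rw [hvw x]
      rw [mulVec_sum']
      exact Finset.sum_congr rfl fun j _ => by rw [Matrix.mulVec_smul, hml2 x j, smul_smul]
    rw [hLdef, Matrix.sub_mulVec, Matrix.sub_mulVec, hml1 x, smul_one_mulVec, hterm2, hvw x,
      Finset.smul_sum, Finset.smul_sum, ← Finset.sum_sub_distrib, ← Finset.sum_sub_distrib]
    refine Finset.sum_congr rfl fun j _ => ?_
    rw [smul_smul, smul_smul, ← sub_smul, ← sub_smul]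
    congr 1
    push_cast
    ring
  -- action of mlog ρB and N on the conditional states
  have hmlψ : ∀ x, mlog ρB *ᵥ ψ x = ∑ j, (cc x j * ((Real.logb 2 (μ j) : ℝ) : ℂ)) • u j := by
    intro x
    conv_lhs => rw [hψdecomp x]
    rw [mulVec_sum']
    exact Finset.sum_congr rfl fun j _ => by rw [Matrix.mulVec_smul, hml3 j, smul_smul]
  have hNψ : ∀ x, N *ᵥ ψ x
      = ∑ j, (cc x j * ((-Real.logb 2 (μ j) - H : ℝ) : ℂ)) • u j := by
    intro x
    rw [hNdef, Matrix.sub_mulVec, Matrix.neg_mulVec, smul_one_mulVec, hmlψ x, hψdecomp x,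
      Finset.smul_sum, ← Finset.sum_neg_distrib, ← Finset.sum_sub_distrib]
    refine Finset.sum_congr rfl fun j _ => ?_
    rw [smul_smul, ← neg_smul, ← sub_smul]
    congr 1
    push_cast
    ring
  -- square helper
  have hsq : ∀ (z : ℂ) (t : ℝ), (starRingEnd ℂ) (z * (t : ℂ)) * (z * (t : ℂ))
      = ((Complex.normSq z * t ^ 2 : ℝ) : ℂ) := by
    intro z t
    rw [_root_.map_mul, Complex.conj_ofReal,
      show (starRingEnd ℂ) z * (t : ℂ) * (z * (t : ℂ))
        = ((starRingEnd ℂ) z * z) * (t : ℂ) ^ 2 from by ring, hcz]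
    push_cast
    ring
  have hlin : ∀ (z : ℂ) (t : ℝ), (starRingEnd ℂ) z * (z * (t : ℂ))
      = ((Complex.normSq z * t : ℝ) : ℂ) := by
    intro z t
    rw [← mul_assoc, hcz]
    push_cast
    ring
  -- trace of the LHS
  have hLtrace : (ρXB * L ^ 2).trace
      = ((∑ x, p x * ∑ j, Complex.normSq (cc x j)
          * (Real.logb 2 (p x) - Real.logb 2 (p x * μ j) - D) ^ 2 : ℝ) : ℂ) := by
    rw [pow_two, hρXB', trace_ens]
    have hterm : ∀ x, star (v x) ⬝ᵥ ((L * L) *ᵥ v x)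
        = ((∑ j, Complex.normSq (cc x j)
            * (Real.logb 2 (p x) - Real.logb 2 (p x * μ j) - D) ^ 2 : ℝ) : ℂ) := by
      intro x
      rw [← Matrix.mulVec_mulVec, herm_dot_swap hLH, hLv x, dot_sum_ortho _ (hww x),
        Complex.ofReal_sum]
      exact Finset.sum_congr rfl fun j _ => by rw [hsq]
    simp only [hterm]
    rw [Complex.ofReal_sum]
    exact Finset.sum_congr rfl fun x _ => by push_cast; ring
  -- trace of the RHS
  have hNtrace : (ρB * N ^ 2).trace
      = ((∑ x, p x * ∑ j, Complex.normSq (cc x j)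
          * (-Real.logb 2 (μ j) - H) ^ 2 : ℝ) : ℂ) := by
    rw [pow_two, hρB, trace_ens]
    have hterm : ∀ x, star (ψ x) ⬝ᵥ ((N * N) *ᵥ ψ x)
        = ((∑ j, Complex.normSq (cc x j) * (-Real.logb 2 (μ j) - H) ^ 2 : ℝ) : ℂ) := by
      intro x
      rw [← Matrix.mulVec_mulVec, herm_dot_swap hNH, hNψ x,
        dot_sum_ortho _ huu, Complex.ofReal_sum]
      exact Finset.sum_congr rfl fun j _ => by rw [hsq]
    simp only [hterm]
    rw [Complex.ofReal_sum]
    exact Finset.sum_congr rfl fun x _ => by push_cast; ring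
  -- value of the relative entropy
  have hDval : D = ∑ x, p x * ∑ j, Complex.normSq (cc x j)
      * (Real.logb 2 (p x) - Real.logb 2 (p x * μ j)) := by
    have hFv : ∀ x, (mlog ρXB - mlog (ρX ⊗ₖ ρB)) *ᵥ v x
        = ∑ j, (cc x j * ((Real.logb 2 (p x) - Real.logb 2 (p x * μ j) : ℝ) : ℂ)) • w x j := by
      intro x
      have hterm2 : mlog (ρX ⊗ₖ ρB) *ᵥ v x
          = ∑ j, (cc x j * ((Real.logb 2 (p x * μ j) : ℝ) : ℂ)) • w x j := by
        conv_lhs => rw [hvw x]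
        rw [mulVec_sum']
        exact Finset.sum_congr rfl fun j _ => by rw [Matrix.mulVec_smul, hml2 x j, smul_smul]
      rw [Matrix.sub_mulVec, hml1 x, hterm2, hvw x, Finset.smul_sum, ← Finset.sum_sub_distrib]
      refine Finset.sum_congr rfl fun j _ => ?_
      rw [smul_smul, ← sub_smul]
      congr 1
      push_cast
      ring
    have hFtrace : (ρXB * (mlog ρXB - mlog (ρX ⊗ₖ ρB))).trace
        = ((∑ x, p x * ∑ j, Complex.normSq (cc x j)
            * (Real.logb 2 (p x) - Real.logb 2 (p x * μ j)) : ℝ) : ℂ) := by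
      have hgen : ∀ M : Matrix (X × b) (X × b) ℂ,
          (ρXB * M).trace = ∑ x, (p x : ℂ) * (star (v x) ⬝ᵥ (M *ᵥ v x)) := by
        intro M
        rw [hρXB', trace_ens]
      rw [hgen]
      have hterm : ∀ x, star (v x) ⬝ᵥ ((mlog ρXB - mlog (ρX ⊗ₖ ρB)) *ᵥ v x)
          = ((∑ j, Complex.normSq (cc x j)
              * (Real.logb 2 (p x) - Real.logb 2 (p x * μ j)) : ℝ) : ℂ) := by
        intro x
        rw [hFv x]
        conv_lhs => rw [hvw x]
        rw [dot_sum_ortho _ (hww x), Complex.ofReal_sum]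
        exact Finset.sum_congr rfl fun j _ => by rw [hlin]
      simp only [hterm]
      rw [Complex.ofReal_sum]
      exact Finset.sum_congr rfl fun x _ => by push_cast; ring
    rw [hDdef]
    show (ρXB * (mlog ρXB - mlog (ρX ⊗ₖ ρB))).trace.re = _
    rw [hFtrace, Complex.ofReal_re]
  -- value of the entropy
  have hHval : H = -∑ x, p x * ∑ j, Complex.normSq (cc x j) * Real.logb 2 (μ j) := by
    have hBtrace : (ρB * mlog ρB).trace
        = ((∑ x, p x * ∑ j, Complex.normSq (cc x j) * Real.logb 2 (μ j) : ℝ) : ℂ) := by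
      have hgen : ∀ M : Matrix b b ℂ,
          (ρB * M).trace = ∑ x, (p x : ℂ) * (star (ψ x) ⬝ᵥ (M *ᵥ ψ x)) := by
        intro M
        rw [hρB, trace_ens]
      rw [hgen]
      have hterm : ∀ x, star (ψ x) ⬝ᵥ (mlog ρB *ᵥ ψ x)
          = ((∑ j, Complex.normSq (cc x j) * Real.logb 2 (μ j) : ℝ) : ℂ) := by
        intro x
        rw [hmlψ x]
        conv_lhs => rw [hψdecomp x]
        rw [dot_sum_ortho _ huu, Complex.ofReal_sum]
        exact Finset.sum_congr rfl fun j _ => by rw [hlin]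
      simp only [hterm]
      rw [Complex.ofReal_sum]
      exact Finset.sum_congr rfl fun x _ => by push_cast; ring
    rw [hHdef]
    show -(ρB * mlog ρB).trace.re = _
    rw [hBtrace, Complex.ofReal_re]
  -- the relative entropy equals the entropy of the average state
  have hDH : D = H := by
    rw [hDval, hHval, ← Finset.sum_neg_distrib]
    refine Finset.sum_congr rfl fun x _ => ?_
    rw [← mul_neg, ← Finset.sum_neg_distrib]
    congr 1
    refine Finset.sum_congr rfl fun j _ => ?_
    by_cases hc : cc x j = 0
    · simp [hc]
    · have hμne : μ j ≠ 0 := fun h => hc (hczero j h x)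
      rw [Real.logb_mul (hp x).ne' hμne]
      ring
  -- conclusion
  rw [hLtrace, hNtrace, Complex.ofReal_re, Complex.ofReal_re]
  refine Finset.sum_congr rfl fun x _ => ?_
  congr 1
  refine Finset.sum_congr rfl fun j _ => ?_
  by_cases hc : cc x j = 0
  · simp [hc]
  · have hμne : μ j ≠ 0 := fun h => hc (hczero j h x)
    rw [Real.logb_mul (hp x).ne' hμne, hDH]
    ring
end

section
/- Key computation in the pure-state cq variance proof: with notation as above, log₂ρ_{XB} − log₂ρ_X⊗I_B − I_X⊗log₂ρ_B = −Σ_x |x⟩⟨x|_X ⊗ [log₂(p(x))(I_B − |ψ^x⟩⟨ψ^x|) + log₂ρ_B], and consequently Tr{ρ_{XB}[log₂ρ_{XB} − log₂ρ_X⊗I_B − I_X⊗log₂ρ_B]²} = Tr{ρ_B[log₂ρ_B]²}. -/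
open Matrix Kronecker ComplexOrder

open Polynomial

/-- Conjugation by a unitary as an ℝ-algebra hom. -/
noncomputable def conjAH {n : Type*} [Fintype n] [DecidableEq n]
    (U : Matrix n n ℂ) (h1 : U * star U = 1) (h2 : star U * U = 1) :
    Matrix n n ℂ →ₐ[ℝ] Matrix n n ℂ where
  toFun M := U * M * star U
  map_one' := by simpa using h1
  map_mul' M N := by
    calc U * (M * N) * star U = U * M * ((star U * U) * (N * star U)) := by
          rw [h2]; noncomm_ring
      _ = (U * M * star U) * (U * N * star U) := by noncomm_ring
  map_zero' := by simp
  map_add' M N := by noncomm_ring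
  commutes' r := by
    simp [Algebra.algebraMap_eq_smul_one, mul_smul_comm, smul_mul_assoc, h1]

lemma aeval_hermitian {n : Type*} [Fintype n] [DecidableEq n]
    {A : Matrix n n ℂ} (hA : A.IsHermitian) (q : ℝ[X]) :
    aeval A q = (hA.eigenvectorUnitary : Matrix n n ℂ) *
      Matrix.diagonal (fun i => ((q.eval (hA.eigenvalues i) : ℝ) : ℂ)) *
      star (hA.eigenvectorUnitary : Matrix n n ℂ) := by
  have h1 : (hA.eigenvectorUnitary : Matrix n n ℂ) * star (hA.eigenvectorUnitary : Matrix n n ℂ) = 1 :=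
    Unitary.mul_star_self_of_mem (hA.eigenvectorUnitary).2
  have h2 : star (hA.eigenvectorUnitary : Matrix n n ℂ) * (hA.eigenvectorUnitary : Matrix n n ℂ) = 1 :=
    Unitary.star_mul_self_of_mem (hA.eigenvectorUnitary).2
  conv_lhs => rw [hA.spectral_theorem, Unitary.conjStarAlgAut_apply]
  have hd : (Matrix.diagonal (RCLike.ofReal ∘ hA.eigenvalues) : Matrix n n ℂ)
      = Matrix.diagonalAlgHom ℝ (fun i => ((hA.eigenvalues i : ℝ) : ℂ)) := rfl
  have key : aeval (conjAH _ h1 h2 (Matrix.diagonal (RCLike.ofReal ∘ hA.eigenvalues))) q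
      = conjAH _ h1 h2 (aeval (Matrix.diagonal (RCLike.ofReal ∘ hA.eigenvalues)) q) :=
    aeval_algHom_apply _ _ _
  have : ((hA.eigenvectorUnitary : Matrix n n ℂ) *
      Matrix.diagonal (RCLike.ofReal ∘ hA.eigenvalues) *
      star (hA.eigenvectorUnitary : Matrix n n ℂ)) =
      conjAH _ h1 h2 (Matrix.diagonal (RCLike.ofReal ∘ hA.eigenvalues)) := rfl
  rw [this, key]
  have hdiag : aeval (Matrix.diagonal (RCLike.ofReal ∘ hA.eigenvalues) : Matrix n n ℂ) q
      = Matrix.diagonal (fun i => ((q.eval (hA.eigenvalues i) : ℝ) : ℂ)) := by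
    rw [hd, aeval_algHom_apply]
    rw [show ((Matrix.diagonalAlgHom ℝ (aeval (fun i => ((hA.eigenvalues i : ℝ) : ℂ)) q) : Matrix n n ℂ))
      = Matrix.diagonal (aeval (fun i => ((hA.eigenvalues i : ℝ) : ℂ)) q) from rfl]
    have hfun : (aeval (fun i => ((hA.eigenvalues i : ℝ) : ℂ)) q : n → ℂ)
        = fun i => ((q.eval (hA.eigenvalues i) : ℝ) : ℂ) := by
      funext i
      have h3 := aeval_algHom_apply (Pi.evalAlgHom ℝ (fun _ : n => ℂ) i)
        (fun j => ((hA.eigenvalues j : ℝ) : ℂ)) q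
      simp only [Pi.evalAlgHom_apply] at h3
      rw [← h3]
      have h4 : ((hA.eigenvalues i : ℝ) : ℂ) = algebraMap ℝ ℂ (hA.eigenvalues i) := rfl
      rw [h4, aeval_algebraMap_apply_eq_algebraMap_eval]
      rfl
    rw [hfun]
  rw [hdiag]
  rfl

lemma matFun_eq_aeval {n : Type*} [Fintype n] [DecidableEq n]
    (f : ℝ → ℝ) {A : Matrix n n ℂ} (hA : A.IsHermitian) (q : ℝ[X])
    (hq : ∀ i, q.eval (hA.eigenvalues i) = f (hA.eigenvalues i)) :
    matFun f A = aeval A q := by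
  rw [matFun, dif_pos hA, aeval_hermitian hA]
  have h : ∀ i, ((f (hA.eigenvalues i) : ℝ) : ℂ) = ((q.eval (hA.eigenvalues i) : ℝ) : ℂ) :=
    fun i => by rw [hq]
  simp only [h]

lemma eigenvalues_root {n : Type*} [Fintype n] [DecidableEq n]
    {A : Matrix n n ℂ} (hA : A.IsHermitian) (q : ℝ[X])
    (h0 : aeval A q = 0) (i : n) : q.eval (hA.eigenvalues i) = 0 := by
  have h2 : star (hA.eigenvectorUnitary : Matrix n n ℂ) * (hA.eigenvectorUnitary : Matrix n n ℂ) = 1 :=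
    Unitary.star_mul_self_of_mem (hA.eigenvectorUnitary).2
  rw [aeval_hermitian hA] at h0
  have := congrArg (fun M => star (hA.eigenvectorUnitary : Matrix n n ℂ) * M *
    (hA.eigenvectorUnitary : Matrix n n ℂ)) h0
  simp only [mul_zero, zero_mul] at this
  rw [show star (hA.eigenvectorUnitary : Matrix n n ℂ) *
      ((hA.eigenvectorUnitary : Matrix n n ℂ) *
        Matrix.diagonal (fun i => ((q.eval (hA.eigenvalues i) : ℝ) : ℂ)) *
        star (hA.eigenvectorUnitary : Matrix n n ℂ)) * (hA.eigenvectorUnitary : Matrix n n ℂ)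
      = (star (hA.eigenvectorUnitary : Matrix n n ℂ) * (hA.eigenvectorUnitary : Matrix n n ℂ)) *
        Matrix.diagonal (fun i => ((q.eval (hA.eigenvalues i) : ℝ) : ℂ)) *
        (star (hA.eigenvectorUnitary : Matrix n n ℂ) * (hA.eigenvectorUnitary : Matrix n n ℂ))
      from by noncomm_ring] at this
  rw [h2, one_mul, mul_one] at this
  have := congrFun (congrFun this i) i
  simp [Matrix.diagonal_apply] at this
  exact_mod_cast this

lemma pow_orth_sum {n X : Type*} [Fintype n] [DecidableEq n] [Fintype X] [DecidableEq X]
    (Q : X → Matrix n n ℂ) (hQ : ∀ x y, Q x * Q y = if x = y then Q x else 0)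
    (c : X → ℝ) (k : ℕ) (hk : 1 ≤ k) :
    (∑ x, (c x : ℂ) • Q x) ^ k = ∑ x, ((c x : ℂ)) ^ k • Q x := by
  induction k with
  | zero => omega
  | succ k ih =>
    rcases Nat.eq_or_lt_of_le hk with h | h
    · simp [← h]
    · have hk1 : 1 ≤ k := by omega
      rw [pow_succ, ih hk1, Finset.sum_mul_sum]
      rw [Finset.sum_comm]
      congr 1; funext y
      rw [Finset.sum_congr rfl (fun x _ => by
        rw [smul_mul_smul_comm, hQ x y])]
      have : ∀ x : X, ((c x : ℂ) ^ k * (c y : ℂ)) • (if x = y then Q x else 0)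
          = if x = y then ((c x : ℂ) ^ k * (c y : ℂ)) • Q x else 0 := by
        intro x; split <;> simp
      simp only [this]
      rw [Finset.sum_ite_eq' Finset.univ y]
      simp [pow_succ]

lemma real_smul_mat {n m : Type*} (r : ℝ) (M : Matrix n m ℂ) : r • M = ((r : ℂ)) • M := by
  ext i j; simp [Complex.real_smul]

lemma aeval_orth_sum {n X : Type*} [Fintype n] [DecidableEq n] [Fintype X] [DecidableEq X]
    (Q : X → Matrix n n ℂ) (hQ : ∀ x y, Q x * Q y = if x = y then Q x else 0)
    (c : X → ℝ) (q : ℝ[X]) (h0 : q.coeff 0 = 0) :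
    aeval (∑ x, (c x : ℂ) • Q x) q = ∑ x, ((q.eval (c x) : ℝ) : ℂ) • Q x := by
  rw [Polynomial.aeval_eq_sum_range]
  have hrhs : ∀ x : X, ((q.eval (c x) : ℝ) : ℂ) • Q x
      = ∑ i ∈ Finset.range (q.natDegree + 1), q.coeff i • ((c x : ℂ) ^ i • Q x) := by
    intro x
    rw [Polynomial.eval_eq_sum_range]
    push_cast
    rw [Finset.sum_smul]
    refine Finset.sum_congr rfl fun i _ => ?_
    rw [real_smul_mat (q.coeff i), smul_smul]
  simp only [hrhs]
  rw [Finset.sum_comm]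
  refine Finset.sum_congr rfl fun i hi => ?_
  rcases Nat.eq_zero_or_pos i with h | h
  · subst h
    simp [h0]
  · rw [← Finset.smul_sum, ← pow_orth_sum Q hQ c i h]

lemma sum_kron {X l m n p : Type*} [Fintype X] (f : X → Matrix l m ℂ) (B : Matrix n p ℂ) :
    (∑ x, f x) ⊗ₖ B = ∑ x, f x ⊗ₖ B := by
  ext ⟨i, j⟩ ⟨i', j'⟩
  simp [Matrix.kroneckerMap_apply, Matrix.sum_apply, Finset.sum_mul]

lemma kron_conjT {l m n p : Type*} (A : Matrix l m ℂ) (B : Matrix n p ℂ) :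
    (A ⊗ₖ B)ᴴ = Aᴴ ⊗ₖ Bᴴ := by
  ext ⟨i, j⟩ ⟨i', j'⟩
  simp [Matrix.kroneckerMap_apply, Matrix.conjTranspose_apply]

lemma vecMulVec_mul_vecMulVec {n : Type*} [Fintype n] (u v w z : n → ℂ) :
    Matrix.vecMulVec u v * Matrix.vecMulVec w z = (v ⬝ᵥ w) • Matrix.vecMulVec u z := by
  ext i j
  simp [Matrix.mul_apply, Matrix.vecMulVec_apply, dotProduct, Finset.sum_mul, Finset.mul_sum]
  refine Finset.sum_congr rfl fun k _ => by ring

lemma vecMulVec_star_herm {n : Type*} (u : n → ℂ) :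
    (Matrix.vecMulVec u (star u))ᴴ = Matrix.vecMulVec u (star u) := by
  ext i j
  simp [Matrix.conjTranspose_apply, Matrix.vecMulVec_apply, mul_comm]

lemma stdBasis_herm {n : Type*} [Fintype n] [DecidableEq n] (x : n) :
    (Matrix.single x x (1 : ℂ))ᴴ = Matrix.single x x (1 : ℂ) := by
  ext i j
  simp [Matrix.conjTranspose_apply, Matrix.single, and_comm]

lemma trace_stdBasis {n : Type*} [Fintype n] [DecidableEq n] (x : n) :
    (Matrix.single x x (1 : ℂ)).trace = 1 := by
  simp [Matrix.trace, Matrix.diag, Matrix.single]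

lemma one_eq_sum_stdBasis {n : Type*} [Fintype n] [DecidableEq n] :
    (1 : Matrix n n ℂ) = ∑ x, Matrix.single x x (1 : ℂ) := by
  ext i j
  by_cases h : i = j
  · subst h
    simp [Matrix.one_apply, Matrix.sum_apply, Matrix.single]
  · rw [Matrix.sum_apply]
    simp only [Matrix.one_apply, h, if_false, Matrix.single, Matrix.of_apply]
    refine (Finset.sum_eq_zero fun x _ => ?_).symm
    simp only [ite_eq_right_iff, and_imp]
    rintro rfl rfl; exact absurd rfl h

lemma diagonal_eq_sum_stdBasis {n : Type*} [Fintype n] [DecidableEq n] (d : n → ℂ) :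
    Matrix.diagonal d = ∑ x, d x • Matrix.single x x (1 : ℂ) := by
  ext i j
  simp [Matrix.diagonal_apply, Matrix.sum_apply, Matrix.single]
  by_cases h : i = j
  · subst h
    simp [Matrix.diagonal_apply, Matrix.sum_apply, Matrix.single]
  · simp [Matrix.diagonal_apply, Matrix.sum_apply, Matrix.single, h, Ne.symm h]
    refine (Finset.sum_eq_zero fun x _ => ?_).symm
    simp only [ite_eq_right_iff, and_imp]
    rintro rfl rfl; exact absurd rfl h

lemma kron_sub {l m n p : Type*} (A : Matrix l m ℂ) (B C : Matrix n p ℂ) :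
    A ⊗ₖ (B - C) = A ⊗ₖ B - A ⊗ₖ C := by
  ext ⟨i, j⟩ ⟨i', j'⟩
  simp [Matrix.kroneckerMap_apply, Matrix.sub_apply, mul_sub]

/-- Key computation in the pure-state cq variance proof. -/
theorem pure_cq_log_difference {X b : Type*} [Fintype X] [DecidableEq X]
    [Fintype b] [DecidableEq b]
    (p : X → ℝ) (hp : ∀ x, 0 < p x) (hp1 : ∑ x, p x = 1)
    (ψ : X → b → ℂ) (hψ : ∀ x, star (ψ x) ⬝ᵥ ψ x = 1)
    (ρXB : Matrix (X × b) (X × b) ℂ)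
    (hρXB : ρXB = ∑ x, p x •
      (Matrix.single x x (1 : ℂ) ⊗ₖ Matrix.vecMulVec (ψ x) (star (ψ x))))
    (ρX : Matrix X X ℂ) (hρX : ρX = Matrix.diagonal fun x => (p x : ℂ))
    (ρB : Matrix b b ℂ) (hρB : ρB = ∑ x, p x • Matrix.vecMulVec (ψ x) (star (ψ x))) :
    mlog ρXB - (mlog ρX) ⊗ₖ (1 : Matrix b b ℂ) - (1 : Matrix X X ℂ) ⊗ₖ (mlog ρB)
      = -∑ x, Matrix.single x x (1 : ℂ) ⊗ₖ
          (Real.logb 2 (p x) •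
            ((1 : Matrix b b ℂ) - Matrix.vecMulVec (ψ x) (star (ψ x))) + mlog ρB) ∧
    (ρXB * (mlog ρXB - (mlog ρX) ⊗ₖ (1 : Matrix b b ℂ) -
        (1 : Matrix X X ℂ) ⊗ₖ (mlog ρB)) ^ 2).trace
      = (ρB * (mlog ρB) ^ 2).trace := by
  classical
  set P : X → Matrix b b ℂ := fun x => Matrix.vecMulVec (ψ x) (star (ψ x)) with hPdef
  set E : X → Matrix X X ℂ := fun x => Matrix.single x x (1 : ℂ) with hEdef
  set Q : X → Matrix (X × b) (X × b) ℂ := fun x => E x ⊗ₖ P x with hQdef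
  set L : Matrix b b ℂ := mlog ρB with hLdef
  have hPP : ∀ x, P x * P x = P x := by
    intro x
    rw [hPdef]
    simp only
    rw [_root_.vecMulVec_mul_vecMulVec, hψ, one_smul]
  have hEE : ∀ x y, E x * E y = if x = y then E x else 0 := by
    intro x y
    by_cases h : x = y
    · subst h
      simp [hEdef, Matrix.single_mul_single_same]
    · simp [hEdef, h, Matrix.single_mul_single_of_ne]
  have hQQ : ∀ x y, Q x * Q y = if x = y then Q x else 0 := by
    intro x y
    rw [hQdef]
    simp only
    rw [← Matrix.mul_kronecker_mul, hEE]
    by_cases h : x = y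
    · simp [h, hPP]
    · simp [h, Matrix.zero_kronecker]
  have hρXB' : ρXB = ∑ x, ((p x : ℂ)) • Q x := by
    rw [hρXB]
    exact Finset.sum_congr rfl fun x _ => real_smul_mat _ _
  have hρX' : ρX = ∑ x, ((p x : ℂ)) • E x := by
    rw [hρX]
    exact diagonal_eq_sum_stdBasis _
  -- Hermiticity
  have hermXB : ρXB.IsHermitian := by
    rw [hρXB']
    show _ᴴ = _
    rw [Matrix.conjTranspose_sum]
    refine Finset.sum_congr rfl fun x _ => ?_
    rw [Matrix.conjTranspose_smul, hQdef]
    simp only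
    rw [kron_conjT, hEdef, hPdef]
    simp only
    rw [stdBasis_herm, vecMulVec_star_herm, Complex.star_def, Complex.conj_ofReal]
  have hermX : ρX.IsHermitian := by
    rw [hρX]
    refine Matrix.isHermitian_diagonal_of_self_adjoint _ ?_
    funext x
    exact Complex.conj_ofReal _
  -- interpolation polynomial
  set S : Finset ℝ := insert (0 : ℝ) (Finset.image p Finset.univ) with hSdef
  set q : Polynomial ℝ := Lagrange.interpolate S id (Real.logb 2) with hqdef
  have hqS : ∀ t ∈ S, q.eval t = Real.logb 2 t := by
    intro t ht
    exact Lagrange.eval_interpolate_at_node _ (Set.injOn_id _) ht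
  have hq0 : q.coeff 0 = 0 := by
    rw [Polynomial.coeff_zero_eq_eval_zero, hqS 0 (Finset.mem_insert_self _ _), Real.logb_zero]
  set m : Polynomial ℝ :=
    Polynomial.X * ∏ x, (Polynomial.X - Polynomial.C (p x)) with hmdef
  have hme : ∀ t, m.eval t = t * ∏ x, (t - p x) := by
    intro t
    rw [hmdef]
    simp [Polynomial.eval_prod]
  have hm0 : m.coeff 0 = 0 := by
    rw [Polynomial.coeff_zero_eq_eval_zero, hme]; ring
  have hmev : ∀ x, m.eval (p x) = 0 := by
    intro x
    rw [hme]
    rw [Finset.prod_eq_zero (Finset.mem_univ x) (sub_self (p x))]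
    ring
  have hroot_mem : ∀ t : ℝ, m.eval t = 0 → t ∈ S := by
    intro t ht
    rw [hme] at ht
    rcases mul_eq_zero.mp ht with h | h
    · rw [hSdef, h]; exact Finset.mem_insert_self _ _
    · obtain ⟨x, -, hx⟩ := Finset.prod_eq_zero_iff.mp h
      rw [hSdef]
      refine Finset.mem_insert_of_mem ?_
      rw [sub_eq_zero] at hx
      exact hx ▸ Finset.mem_image_of_mem p (Finset.mem_univ x)
  have hpS : ∀ x, p x ∈ S :=
    fun x => Finset.mem_insert_of_mem (Finset.mem_image_of_mem p (Finset.mem_univ x))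
  -- log formulas
  have hlogXB : mlog ρXB = ∑ x, ((Real.logb 2 (p x) : ℝ) : ℂ) • Q x := by
    have hmXB : Polynomial.aeval ρXB m = 0 := by
      rw [hρXB', aeval_orth_sum Q hQQ p m hm0]
      simp [hmev]
    rw [mlog, matFun_eq_aeval _ hermXB q
      (fun i => hqS _ (hroot_mem _ (eigenvalues_root hermXB m hmXB i)))]
    rw [hρXB', aeval_orth_sum Q hQQ p q hq0]
    exact Finset.sum_congr rfl fun x _ => by rw [hqS _ (hpS x)]
  have hlogX : mlog ρX = ∑ x, ((Real.logb 2 (p x) : ℝ) : ℂ) • E x := by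
    have hmX : Polynomial.aeval ρX m = 0 := by
      rw [hρX', aeval_orth_sum E hEE p m hm0]
      simp [hmev]
    rw [mlog, matFun_eq_aeval _ hermX q
      (fun i => hqS _ (hroot_mem _ (eigenvalues_root hermX m hmX i)))]
    rw [hρX', aeval_orth_sum E hEE p q hq0]
    exact Finset.sum_congr rfl fun x _ => by rw [hqS _ (hpS x)]
  -- Part 1
  have h1 : mlog ρXB - (mlog ρX) ⊗ₖ (1 : Matrix b b ℂ) - (1 : Matrix X X ℂ) ⊗ₖ L
      = -∑ x, E x ⊗ₖ (Real.logb 2 (p x) • ((1 : Matrix b b ℂ) - P x) + L) := by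
    rw [hlogXB, hlogX, one_eq_sum_stdBasis (n := X)]
    rw [sum_kron, sum_kron]
    rw [← Finset.sum_sub_distrib, ← Finset.sum_sub_distrib, ← Finset.sum_neg_distrib]
    refine Finset.sum_congr rfl fun x _ => ?_
    rw [Matrix.kronecker_add, Matrix.smul_kronecker]
    rw [show (Real.logb 2 (p x) • ((1 : Matrix b b ℂ) - P x)) =
      ((Real.logb 2 (p x) : ℂ)) • ((1 : Matrix b b ℂ) - P x) from real_smul_mat _ _]
    rw [Matrix.kronecker_smul, kron_sub]
    rw [hQdef]
    simp only
    module
  refine ⟨h1, ?_⟩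
  -- Part 2
  rw [h1]
  set M : X → Matrix b b ℂ :=
    fun x => Real.logb 2 (p x) • ((1 : Matrix b b ℂ) - P x) + L with hMdef
  have hD2 : (-∑ x, E x ⊗ₖ M x) ^ 2 = ∑ x, E x ⊗ₖ (M x * M x) := by
    rw [neg_sq, sq, Finset.sum_mul_sum]
    rw [Finset.sum_comm]
    refine Finset.sum_congr rfl fun y _ => ?_
    have hterm : ∀ x : X, (E x ⊗ₖ M x) * (E y ⊗ₖ M y)
        = if x = y then E x ⊗ₖ (M x * M y) else 0 := by
      intro x
      rw [← Matrix.mul_kronecker_mul, hEE]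
      split <;> simp [Matrix.zero_kronecker]
    simp only [hterm]
    rw [Finset.sum_ite_eq' Finset.univ y fun x => E x ⊗ₖ (M x * M y)]
    simp
  rw [hD2, hρXB', Finset.sum_mul_sum]
  have hterm2 : ∀ x y : X, ((p x : ℂ)) • Q x * (E y ⊗ₖ (M y * M y))
      = if x = y then ((p x : ℂ)) • (E x ⊗ₖ (P x * (M y * M y))) else 0 := by
    intro x y
    rw [smul_mul_assoc, hQdef]
    simp only
    rw [← Matrix.mul_kronecker_mul, hEE]
    split <;> simp [Matrix.zero_kronecker]
  simp only [hterm2]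
  rw [Finset.sum_comm]
  simp only [Finset.sum_ite_eq' Finset.univ]
  simp only [Finset.mem_univ, if_true]
  rw [Matrix.trace_sum]
  have htr : ∀ x : X, (((p x : ℂ)) • (E x ⊗ₖ (P x * (M x * M x)))).trace
      = (p x : ℂ) * ((P x * (L * L)).trace) := by
    intro x
    rw [Matrix.trace_smul, Matrix.trace_kronecker, trace_stdBasis, one_mul, smul_eq_mul]
    refine congrArg ((p x : ℂ) * ·) ?_
    -- trace (P (M M)) = trace (P L L)
    have hPM : P x * M x = P x * L := by
      rw [hMdef]
      simp only
      rw [mul_add, mul_smul_comm, mul_sub, mul_one, hPP, sub_self, smul_zero, zero_add]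
    rw [← mul_assoc, hPM]
    rw [hMdef]
    simp only
    rw [mul_add, mul_smul_comm, mul_sub, mul_one]
    rw [Matrix.trace_add, Matrix.trace_smul, Matrix.trace_sub]
    have hcyc : (P x * L * P x).trace = (P x * L).trace := by
      rw [Matrix.trace_mul_comm, ← mul_assoc, hPP]
    rw [hcyc, sub_self, smul_zero, zero_add, mul_assoc]
  simp only [htr]
  rw [hρB, sq]
  rw [show (∑ x, p x • P x) * (L * L) = ∑ x, (p x : ℂ) • (P x * (L * L)) from by
    rw [Finset.sum_mul]
    exact Finset.sum_congr rfl fun x _ => by rw [real_smul_mat, smul_mul_assoc]]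
  rw [Matrix.trace_sum]
  exact Finset.sum_congr rfl fun x _ => by rw [Matrix.trace_smul, smul_eq_mul]
end
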